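/- arXiv:2407.02615 — 6 statements merged into one kernel-verified Lean document; each statement's English description precedes it below -/
import Mathlib

section
/- Let M be a monoid equipped with a linear order that is a well-order and strictly compatible with multiplication on both sides. Then for every a ∈ M there are only finitely many finite lists (a_1, …, a_n), n ≥ 0, of elements of M \ {1} with a_1 ⋯ a_n = a; that is, for each a ∈ M the set of lists l of elements of M with all entries different from 1 and product equal to a is finite. -/
section Aux

variable {M : Type*} [Monoid M] [LinearOrder M]
    (hwo : ∀ s : Set M, s.Nonempty → ∃ m ∈ s, ∀ x ∈ s, m ≤ x)
    (hmul : ∀ a b c : M, a < b → a * c < b * c ∧ c * a < c * b)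

include hwo hmul

lemma aux_one_le : ∀ x : M, 1 ≤ x := by
  obtain ⟨m, -, hm⟩ := hwo Set.univ ⟨1, trivial⟩
  intro x
  rcases lt_trichotomy m 1 with h | h | h
  · exact absurd (hm (m * m) trivial) (not_le.2 (by simpa using (hmul m 1 m h).1))
  · exact h ▸ hm x trivial
  · exact le_trans h.le (hm x trivial)

lemma aux_mul_le_mul : ∀ {a b c d : M}, a ≤ b → c ≤ d → a * c ≤ b * d := by
  intro a b c d hab hcd
  have h1 : a * c ≤ b * c := by
    rcases hab.lt_or_eq with h | h
    · exact (hmul a b c h).1.le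
    · exact h ▸ le_refl _
  rcases hcd.lt_or_eq with h | h
  · exact h1.trans (hmul c d b h).2.le
  · exact h ▸ h1

lemma aux_prod_le {l₁ l₂ : List M} (h : List.SublistForall₂ (· ≤ ·) l₁ l₂) :
    l₁.prod ≤ l₂.prod := by
  induction h with
  | nil =>
    simp only [List.prod_nil]
    calc (1 : M) ≤ _ := aux_one_le hwo hmul _
  | cons hab _ ih =>
    simp only [List.prod_cons]
    exact aux_mul_le_mul hwo hmul hab ih
  | cons_right h ih =>
    rename_i b l1 l2
    simp only [List.prod_cons]
    calc l1.prod ≤ l2.prod := ih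
    _ = 1 * l2.prod := (one_mul _).symm
    _ ≤ b * l2.prod := aux_mul_le_mul hwo hmul (aux_one_le hwo hmul _) le_rfl

lemma aux_prod_lt {l₁ l₂ : List M} (h : List.SublistForall₂ (· ≤ ·) l₁ l₂)
    (h1 : ∀ x ∈ l₂, x ≠ 1) (hne : l₁ ≠ l₂) : l₁.prod < l₂.prod := by
  induction h with
  | nil =>
    rename_i l
    match l, hne with
    | b :: t, _ =>
      have hb : 1 < b := lt_of_le_of_ne (aux_one_le hwo hmul b)
        (Ne.symm (h1 b List.mem_cons_self))
      simp only [List.prod_nil, List.prod_cons]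
      calc (1 : M) < b := hb
      _ = b * 1 := (mul_one b).symm
      _ ≤ b * t.prod := aux_mul_le_mul hwo hmul le_rfl (aux_one_le hwo hmul _)
  | cons hab hsub ih =>
    rename_i x b l1 l2
    simp only [List.prod_cons]
    rcases hab.lt_or_eq with h | h
    · calc x * l1.prod ≤ x * l2.prod :=
        aux_mul_le_mul hwo hmul le_rfl (aux_prod_le hwo hmul hsub)
      _ < b * l2.prod := (hmul x b l2.prod h).1
    · subst h
      have hne' : l1 ≠ l2 := fun hh => hne (by rw [hh])
      exact (hmul _ _ x (ih (fun y hy => h1 y (List.mem_cons_of_mem _ hy)) hne')).2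
  | cons_right hsub ih =>
    rename_i b l1 l2
    have hb : 1 < b := lt_of_le_of_ne (aux_one_le hwo hmul b)
      (Ne.symm (h1 b List.mem_cons_self))
    simp only [List.prod_cons]
    calc l1.prod ≤ l2.prod := aux_prod_le hwo hmul hsub
    _ = 1 * l2.prod := (one_mul _).symm
    _ < b * l2.prod := (hmul 1 b l2.prod hb).1

end Aux

/-- In a monoid with a linear order that is a well-order and strictly
compatible with multiplication on both sides, every element `a` has only finitely many
representations `a = a₁ ⋯ aₙ` (n ≥ 0) with all factors different from `1`. -/
theorem stmt1 {M : Type*} [Monoid M] [LinearOrder M]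
    (hwo : ∀ s : Set M, s.Nonempty → ∃ m ∈ s, ∀ x ∈ s, m ≤ x)
    (hmul : ∀ a b c : M, a < b → a * c < b * c ∧ c * a < c * b)
    (a : M) :
    {l : List M | (∀ x ∈ l, x ≠ 1) ∧ l.prod = a}.Finite := by
  by_contra hinf
  replace hinf : {l : List M | (∀ x ∈ l, x ≠ 1) ∧ l.prod = a}.Infinite := hinf
  have hwf : WellFounded ((· < ·) : M → M → Prop) := by
    rw [WellFounded.wellFounded_iff_has_min]
    intro s hs
    obtain ⟨m, hm, hle⟩ := hwo s hs
    exact ⟨m, hm, fun x hx => not_lt.2 (hle x hx)⟩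
  have hpwo : (Set.univ : Set M).IsPWO := by
    have : (Set.univ : Set M).IsWF := Set.isWF_univ_iff.2 ⟨hwf⟩
    exact this.isPWO
  have higman := Set.PartiallyWellOrderedOn.partiallyWellOrderedOn_sublistForall₂
    ((· ≤ ·) : M → M → Prop) hpwo
  obtain ⟨f, finj⟩ := hinf.natEmbedding
  obtain ⟨m, n, hmn, hsub⟩ := higman.exists_lt (f := fun k => (f k : List M))
    (fun k x _ => trivial)
  have hne : ((f m : List M)) ≠ (f n : List M) := fun h =>
    (Nat.lt_irrefl n (finj (Subtype.ext h) ▸ hmn))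
  have h1 := (f n).2.1
  have hlt := aux_prod_lt hwo hmul hsub h1 hne
  rw [(f m).2.2, (f n).2.2] at hlt
  exact lt_irrefl a hlt
end

section
/- Let S be a semiring equipped with a linear order such that for all a, b, c ∈ S with a < b one has a + c < b + c; if c > 0 then ac < bc and ca < cb; and if c < 0 then ac > bc and ca > cb. Let M be a monoid equipped with a linear order strictly compatible with multiplication on both sides (a < b implies ac < bc and ca < cb). Then the monoid semiring S[M] (finitely supported functions M → S with pointwise addition and convolution product, i.e., MonoidAlgebra S M) admits a linear order with the same three properties (addition is strictly monotone, multiplication by positive elements is strictly monotone, multiplication by negative elements strictly reverses the order). -/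
instance stmt3CoeFun {S M : Type*} [Semiring S] : CoeFun (MonoidAlgebra S M) (fun _ => M → S) :=
  ⟨fun f => f.coeff⟩

section Stmt3Aux

variable {S M : Type*} [Semiring S] [LinearOrder S] [Monoid M] [LinearOrder M]

set_option linter.unusedSectionVars false in
/-- Representation of a coefficient of a product in a monoid algebra as a double sum
over fixed finsets containing the supports. -/
lemma stmt3_mulApply (f h : MonoidAlgebra S M) (A B : Finset M)
    (hA : f.coeff.support ⊆ A) (hB : h.coeff.support ⊆ B) (n : M) :
    (f * h) n = ∑ a ∈ A, ∑ b ∈ B, if a * b = n then f a * h b else 0 := by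
  classical
  rw [MonoidAlgebra.mul_apply]
  rw [Finsupp.sum_of_support_subset f.coeff hA _ (by intro i _; simp [Finsupp.sum])]
  refine Finset.sum_congr rfl fun a _ => ?_
  rw [Finsupp.sum_of_support_subset h.coeff hB _ (by intro i _; simp)]

/-- Core lemma, right multiplication: if `f` and `g` agree above `m` and `h` is supported
on elements `≤ m0`, then `f*h` and `g*h` agree above `m*m0`, and at `m*m0` they differ by
the leading terms `f m * h m0` resp. `g m * h m0`. -/
lemma stmt3_keyR (hM : ∀ a b c : M, a < b → a * c < b * c ∧ c * a < c * b)
    (f g h : MonoidAlgebra S M) (m m0 : M)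
    (hfg : ∀ j, m < j → f j = g j) (hne : f m ≠ g m)
    (hh : ∀ j, m0 < j → h j = 0) (hm0 : h m0 ≠ 0) :
    (∀ n, m * m0 < n → (f * h) n = (g * h) n) ∧
      ∃ C : S, (f * h) (m * m0) = C + f m * h m0 ∧ (g * h) (m * m0) = C + g m * h m0 := by
  classical
  have mR : ∀ a b c : M, a ≤ b → a * c ≤ b * c := fun a b c hab =>
    hab.lt_or_eq.elim (fun h' => (hM _ _ _ h').1.le) (fun h' => by rw [h'])
  have mL : ∀ a b c : M, a ≤ b → c * a ≤ c * b := fun a b c hab =>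
    hab.lt_or_eq.elim (fun h' => (hM _ _ _ h').2.le) (fun h' => by rw [h'])
  set A : Finset M := f.coeff.support ∪ g.coeff.support with hAdef
  set B : Finset M := h.coeff.support with hBdef
  have hAf : f.coeff.support ⊆ A := Finset.subset_union_left
  have hAg : g.coeff.support ⊆ A := Finset.subset_union_right
  have hBh : h.coeff.support ⊆ B := subset_rfl
  have hBle : ∀ b ∈ B, b ≤ m0 := by
    intro b hb
    by_contra hc
    exact (Finsupp.mem_support_iff.mp hb) (hh b (lt_of_not_ge hc))
  have hmA : m ∈ A := by
    rcases ne_or_eq (f m) 0 with h0 | h0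
    · exact Finset.mem_union_left _ (Finsupp.mem_support_iff.mpr h0)
    · exact Finset.mem_union_right _
        (Finsupp.mem_support_iff.mpr (by rw [← h0]; exact (Ne.symm hne)))
  have hm0B : m0 ∈ B := Finsupp.mem_support_iff.mpr hm0
  constructor
  · intro n hn
    rw [stmt3_mulApply f h A B hAf hBh, stmt3_mulApply g h A B hAg hBh]
    refine Finset.sum_congr rfl fun a _ => Finset.sum_congr rfl fun b hb => ?_
    by_cases hab : a * b = n
    · have hma : m < a := by
        by_contra hc
        have : a * b ≤ m * m0 := (mR a m b (le_of_not_gt hc)).trans (mL b m0 m (hBle b hb))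
        exact absurd (hab ▸ this) (not_le.mpr hn)
      rw [if_pos hab, if_pos hab, hfg a hma]
    · rw [if_neg hab, if_neg hab]
  · refine ⟨∑ a ∈ A.erase m, ∑ b ∈ B, if a * b = m * m0 then f a * h b else 0, ?_, ?_⟩
    · rw [stmt3_mulApply f h A B hAf hBh, ← Finset.sum_erase_add A _ hmA]
      congr 1
      have : ∀ b ∈ B, (if m * b = m * m0 then f m * h b else 0)
          = (if b = m0 then f m * h b else 0) := by
        intro b hb
        rcases lt_trichotomy b m0 with hlt | heq | hgt
        · rw [if_neg (ne_of_lt (hM _ _ _ hlt).2), if_neg (ne_of_lt hlt)]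
        · rw [heq]; simp
        · exact absurd (hBle b hb) (not_le.mpr hgt)
      rw [Finset.sum_congr rfl this, Finset.sum_ite_eq' B m0 (fun b => f m * h b), if_pos hm0B]
    · rw [stmt3_mulApply g h A B hAg hBh, ← Finset.sum_erase_add A _ hmA]
      congr 1
      · refine Finset.sum_congr rfl fun a ha => Finset.sum_congr rfl fun b hb => ?_
        have ham : a ≠ m := Finset.ne_of_mem_erase ha
        rcases ham.lt_or_gt with hlt | hgt
        · have : a * b < m * m0 := lt_of_lt_of_le (hM _ _ _ hlt).1 (mL b m0 m (hBle b hb))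
          rw [if_neg (ne_of_lt this), if_neg (ne_of_lt this)]
        · rw [hfg a hgt]
      · have : ∀ b ∈ B, (if m * b = m * m0 then g m * h b else 0)
            = (if b = m0 then g m * h b else 0) := by
          intro b hb
          rcases lt_trichotomy b m0 with hlt | heq | hgt
          · rw [if_neg (ne_of_lt (hM _ _ _ hlt).2), if_neg (ne_of_lt hlt)]
          · rw [heq]; simp
          · exact absurd (hBle b hb) (not_le.mpr hgt)
        rw [Finset.sum_congr rfl this, Finset.sum_ite_eq' B m0 (fun b => g m * h b), if_pos hm0B]

/-- Core lemma, left multiplication. -/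
lemma stmt3_keyL (hM : ∀ a b c : M, a < b → a * c < b * c ∧ c * a < c * b)
    (f g h : MonoidAlgebra S M) (m m0 : M)
    (hfg : ∀ j, m < j → f j = g j) (hne : f m ≠ g m)
    (hh : ∀ j, m0 < j → h j = 0) (hm0 : h m0 ≠ 0) :
    (∀ n, m0 * m < n → (h * f) n = (h * g) n) ∧
      ∃ C : S, (h * f) (m0 * m) = C + h m0 * f m ∧ (h * g) (m0 * m) = C + h m0 * g m := by
  classical
  have mR : ∀ a b c : M, a ≤ b → a * c ≤ b * c := fun a b c hab =>
    hab.lt_or_eq.elim (fun h' => (hM _ _ _ h').1.le) (fun h' => by rw [h'])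
  have mL : ∀ a b c : M, a ≤ b → c * a ≤ c * b := fun a b c hab =>
    hab.lt_or_eq.elim (fun h' => (hM _ _ _ h').2.le) (fun h' => by rw [h'])
  set A : Finset M := f.coeff.support ∪ g.coeff.support with hAdef
  set B : Finset M := h.coeff.support with hBdef
  have hAf : f.coeff.support ⊆ A := Finset.subset_union_left
  have hAg : g.coeff.support ⊆ A := Finset.subset_union_right
  have hBh : h.coeff.support ⊆ B := subset_rfl
  have hBle : ∀ b ∈ B, b ≤ m0 := by
    intro b hb
    by_contra hc
    exact (Finsupp.mem_support_iff.mp hb) (hh b (lt_of_not_ge hc))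
  have hmA : m ∈ A := by
    rcases ne_or_eq (f m) 0 with h0 | h0
    · exact Finset.mem_union_left _ (Finsupp.mem_support_iff.mpr h0)
    · exact Finset.mem_union_right _
        (Finsupp.mem_support_iff.mpr (by rw [← h0]; exact (Ne.symm hne)))
  have hm0B : m0 ∈ B := Finsupp.mem_support_iff.mpr hm0
  have hrep : ∀ (f' : MonoidAlgebra S M), f'.coeff.support ⊆ A → ∀ n,
      (h * f') n = ∑ a ∈ A, ∑ b ∈ B, if b * a = n then h b * f' a else 0 := by
    intro f' hA' n
    rw [stmt3_mulApply h f' B A hBh hA' n, Finset.sum_comm]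
  constructor
  · intro n hn
    rw [hrep f hAf, hrep g hAg]
    refine Finset.sum_congr rfl fun a _ => Finset.sum_congr rfl fun b hb => ?_
    by_cases hab : b * a = n
    · have hma : m < a := by
        by_contra hc
        have : b * a ≤ m0 * m := (mL a m b (le_of_not_gt hc)).trans (mR b m0 m (hBle b hb))
        exact absurd (hab ▸ this) (not_le.mpr hn)
      rw [if_pos hab, if_pos hab, hfg a hma]
    · rw [if_neg hab, if_neg hab]
  · refine ⟨∑ a ∈ A.erase m, ∑ b ∈ B, if b * a = m0 * m then h b * f a else 0, ?_, ?_⟩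
    · rw [hrep f hAf, ← Finset.sum_erase_add A _ hmA]
      congr 1
      have : ∀ b ∈ B, (if b * m = m0 * m then h b * f m else 0)
          = (if b = m0 then h b * f m else 0) := by
        intro b hb
        rcases lt_trichotomy b m0 with hlt | heq | hgt
        · rw [if_neg (ne_of_lt (hM _ _ _ hlt).1), if_neg (ne_of_lt hlt)]
        · rw [heq]; simp
        · exact absurd (hBle b hb) (not_le.mpr hgt)
      rw [Finset.sum_congr rfl this, Finset.sum_ite_eq' B m0 (fun b => h b * f m), if_pos hm0B]
    · rw [hrep g hAg, ← Finset.sum_erase_add A _ hmA]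
      congr 1
      · refine Finset.sum_congr rfl fun a ha => Finset.sum_congr rfl fun b hb => ?_
        have ham : a ≠ m := Finset.ne_of_mem_erase ha
        rcases ham.lt_or_gt with hlt | hgt
        · have : b * a < m0 * m := lt_of_lt_of_le (hM _ _ _ hlt).2 (mR b m0 m (hBle b hb))
          rw [if_neg (ne_of_lt this), if_neg (ne_of_lt this)]
        · rw [hfg a hgt]
      · have : ∀ b ∈ B, (if b * m = m0 * m then h b * g m else 0)
            = (if b = m0 then h b * g m else 0) := by
          intro b hb
          rcases lt_trichotomy b m0 with hlt | heq | hgt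
          · rw [if_neg (ne_of_lt (hM _ _ _ hlt).1), if_neg (ne_of_lt hlt)]
          · rw [heq]; simp
          · exact absurd (hBle b hb) (not_le.mpr hgt)
        rw [Finset.sum_congr rfl this, Finset.sum_ite_eq' B m0 (fun b => h b * g m), if_pos hm0B]

end Stmt3Aux

/-- If `S` is a strictly ordered semiring and `M` a strictly ordered monoid,
then the monoid semiring `S[M] = MonoidAlgebra S M` admits a linear order making it a
strictly ordered semiring: addition is strictly monotone, multiplication by positive
elements is strictly monotone on both sides, and multiplication by negative elements
strictly reverses the order on both sides. -/
theorem stmt3 {S M : Type*} [Semiring S] [LinearOrder S] [Monoid M] [LinearOrder M]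
    (hadd : ∀ a b c : S, a < b → a + c < b + c)
    (hposR : ∀ a b c : S, a < b → 0 < c → a * c < b * c)
    (hposL : ∀ a b c : S, a < b → 0 < c → c * a < c * b)
    (hnegR : ∀ a b c : S, a < b → c < 0 → b * c < a * c)
    (hnegL : ∀ a b c : S, a < b → c < 0 → c * b < c * a)
    (hM : ∀ a b c : M, a < b → a * c < b * c ∧ c * a < c * b) :
    ∃ lo : LinearOrder (MonoidAlgebra S M),
      (∀ f g h : MonoidAlgebra S M, lo.lt f g → lo.lt (f + h) (g + h)) ∧
      (∀ f g h : MonoidAlgebra S M, lo.lt f g → lo.lt 0 h →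
        lo.lt (f * h) (g * h) ∧ lo.lt (h * f) (h * g)) ∧
      (∀ f g h : MonoidAlgebra S M, lo.lt f g → lo.lt h 0 →
        lo.lt (g * h) (f * h) ∧ lo.lt (h * g) (h * f)) := by
  classical
  let e : MonoidAlgebra S M → Lex (Mᵒᵈ →₀ S) :=
    fun f => toLex (Finsupp.equivCongrLeft (OrderDual.toDual : M ≃ Mᵒᵈ) f.coeff)
  have einj : Function.Injective e :=
    toLex.injective.comp ((Finsupp.equivCongrLeft (OrderDual.toDual : M ≃ Mᵒᵈ)).injective.comp
      MonoidAlgebra.coeff_injective)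
  let lo : LinearOrder (MonoidAlgebra S M) := LinearOrder.lift' e einj
  have ltc : ∀ f g : MonoidAlgebra S M,
      lo.lt f g ↔ ∃ i : M, (∀ j, i < j → f j = g j) ∧ f i < g i := by
    intro f g
    constructor
    · rintro ⟨j, h1, h2⟩
      exact ⟨OrderDual.ofDual j, fun d hd => h1 (OrderDual.toDual d) hd, h2⟩
    · rintro ⟨i, h1, h2⟩
      exact ⟨OrderDual.toDual i, fun d hd => h1 (OrderDual.ofDual d) hd, h2⟩
  refine ⟨lo, ?_, ?_, ?_⟩
  · -- addition
    intro f g h hfg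
    obtain ⟨i, h1, h2⟩ := (ltc f g).mp hfg
    refine (ltc _ _).mpr ⟨i, fun j hj => ?_, ?_⟩
    · show f j + h j = g j + h j
      rw [h1 j hj]
    · exact hadd _ _ _ h2
  · -- multiplication by positive elements
    intro f g h hfg h0h
    obtain ⟨m, h1, h2⟩ := (ltc f g).mp hfg
    obtain ⟨m0, h3, h4⟩ := (ltc 0 h).mp h0h
    have hh0 : ∀ j, m0 < j → h j = 0 := fun j hj => by
      have := h3 j hj; simpa using this.symm
    have h4' : (0 : S) < h m0 := by simpa using h4
    have hm0ne : h m0 ≠ 0 := (ne_of_lt h4').symm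
    constructor
    · obtain ⟨heq, C, hCf, hCg⟩ := stmt3_keyR hM f g h m m0 h1 (ne_of_lt h2) hh0 hm0ne
      refine (ltc _ _).mpr ⟨m * m0, heq, ?_⟩
      rw [hCf, hCg, add_comm C, add_comm C]
      exact hadd _ _ C (hposR (f m) (g m) (h m0) h2 h4')
    · obtain ⟨heq, C, hCf, hCg⟩ := stmt3_keyL hM f g h m m0 h1 (ne_of_lt h2) hh0 hm0ne
      refine (ltc _ _).mpr ⟨m0 * m, heq, ?_⟩
      rw [hCf, hCg, add_comm C, add_comm C]
      exact hadd _ _ C (hposL (f m) (g m) (h m0) h2 h4')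
  · -- multiplication by negative elements
    intro f g h hfg hh0'
    obtain ⟨m, h1, h2⟩ := (ltc f g).mp hfg
    obtain ⟨m0, h3, h4⟩ := (ltc h 0).mp hh0'
    have hh0 : ∀ j, m0 < j → h j = 0 := fun j hj => by
      have := h3 j hj; simpa using this
    have h4' : h m0 < 0 := by simpa using h4
    have hm0ne : h m0 ≠ 0 := ne_of_lt h4'
    constructor
    · obtain ⟨heq, C, hCf, hCg⟩ := stmt3_keyR hM f g h m m0 h1 (ne_of_lt h2) hh0 hm0ne
      refine (ltc _ _).mpr ⟨m * m0, fun n hn => (heq n hn).symm, ?_⟩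
      rw [hCf, hCg, add_comm C, add_comm C]
      exact hadd _ _ C (hnegR (f m) (g m) (h m0) h2 h4')
    · obtain ⟨heq, C, hCf, hCg⟩ := stmt3_keyL hM f g h m m0 h1 (ne_of_lt h2) hh0 hm0ne
      refine (ltc _ _).mpr ⟨m0 * m, fun n hn => (heq n hn).symm, ?_⟩
      rw [hCf, hCg, add_comm C, add_comm C]
      exact hadd _ _ C (hnegL (f m) (g m) (h m0) h2 h4')
end

section
/- Let X and Y be (possibly empty) sets. Then the monoid M = [Y] ∗ ⟨X⟩, the monoid coproduct of the free commutative monoid [Y] on Y and the free monoid ⟨X⟩ on X, admits a linear order that is a well-order and strictly compatible with multiplication on both sides: a < b implies ac < bc and ca < cb for all c ∈ M. -/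
/-- A monoid is strictly well-ordered if it admits a linear order that is a well-order
(every nonempty subset has a least element) and strictly compatible with multiplication
on both sides. -/
def IsStrictWellOrderedMonoid (M : Type*) [Monoid M] : Prop :=
  ∃ lo : LinearOrder M,
    (∀ s : Set M, s.Nonempty → ∃ m ∈ s, ∀ x ∈ s, lo.le m x) ∧
    (∀ a b c : M, lo.lt a b → lo.lt (a * c) (b * c) ∧ lo.lt (c * a) (c * b))

namespace Stmt8Aux

/-! ### Generic list lemmas -/

theorem lex_cons_iff' {α : Type*} {r : α → α → Prop} {a b : α} {l m : List α} :
    List.Lex r (a :: l) (b :: m) ↔ r a b ∨ (a = b ∧ List.Lex r l m) := by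
  constructor
  · intro h
    cases h with
    | rel h => exact Or.inl h
    | cons h => exact Or.inr ⟨rfl, h⟩
  · rintro (h | ⟨rfl, h⟩)
    exacts [List.Lex.rel h, List.Lex.cons h]

theorem lex_append_iff {α : Type*} {r : α → α → Prop} :
    ∀ {u v : List α}, u.length = v.length → ∀ {l₁ l₂ : List α},
      (List.Lex r (u ++ l₁) (v ++ l₂) ↔ List.Lex r u v ∨ (u = v ∧ List.Lex r l₁ l₂)) := by
  intro u
  induction u with
  | nil =>
    intro v hv l₁ l₂
    cases v with
    | nil => simpa using fun h => (List.Lex.not_nil_right r _ h).elim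
    | cons b m => simp at hv
  | cons a u ih =>
    intro v hv l₁ l₂
    cases v with
    | nil => simp at hv
    | cons b m =>
      simp only [List.length_cons, Nat.succ.injEq] at hv
      simp only [List.cons_append, lex_cons_iff', ih hv, List.cons.injEq]
      constructor
      · rintro (h | ⟨rfl, h | ⟨rfl, h⟩⟩)
        · exact Or.inl (Or.inl h)
        · exact Or.inl (Or.inr ⟨rfl, h⟩)
        · exact Or.inr ⟨⟨rfl, rfl⟩, h⟩
      · rintro ((h | ⟨rfl, h⟩) | ⟨⟨rfl, rfl⟩, h⟩)
        · exact Or.inl h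
        · exact Or.inr ⟨rfl, Or.inl h⟩
        · exact Or.inr ⟨rfl, Or.inr ⟨rfl, h⟩⟩

/-- Lexicographic order on lists of a fixed length over a well-founded order is
well-founded. -/
theorem lex_fixed_wf {α : Type*} [LT α] (h : WellFounded ((· < ·) : α → α → Prop)) :
    ∀ n : ℕ, WellFounded (fun a b : {l : List α // l.length = n} => List.Lex (· < ·) a.1 b.1)
  | 0 => ⟨fun a => ⟨a, fun b hb => by
      obtain ⟨l, hl⟩ := a
      rw [List.length_eq_zero_iff] at hl
      subst hl
      exact absurd hb List.not_lex_nil⟩⟩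
  | n + 1 => by
    have wfp : WellFounded (Prod.Lex ((· < ·) : α → α → Prop)
        (fun a b : {l : List α // l.length = n} => List.Lex (· < ·) a.1 b.1)) :=
      h.prod_lex (lex_fixed_wf h n)
    refine Subrelation.wf (r := InvImage (Prod.Lex ((· < ·) : α → α → Prop)
        (fun a b : {l : List α // l.length = n} => List.Lex (· < ·) a.1 b.1))
        (fun a => (a.1.head (List.ne_nil_of_length_pos (by omega)),
          ⟨a.1.tail, by simp [a.2]⟩)))
      ?_ (InvImage.wf _ wfp)
    rintro ⟨l₁, hl₁⟩ ⟨l₂, hl₂⟩ hab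
    cases l₁ with
    | nil => simp at hl₁
    | cons x t =>
      cases l₂ with
      | nil => simp at hl₂
      | cons y s =>
        cases hab with
        | rel h' => exact Prod.Lex.left _ _ h'
        | cons h' => exact Prod.Lex.right _ h'

/-! ### The normal-form monoid `W` -/

/-- Normal forms for elements of `[Y] ∗ ⟨X⟩`: a leading commutative part `c` and a
*reversed* list of letters `x ∈ X` each followed by a commutative part. -/
structure W (X Y : Type*) where
  c : Lex (Y →₀ ℕ)
  l : List (X × Lex (Y →₀ ℕ))

variable {X Y : Type*}

noncomputable instance : One (W X Y) := ⟨⟨0, []⟩⟩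

noncomputable instance : Mul (W X Y) :=
  ⟨fun a b =>
    match a with
    | ⟨c, []⟩ => ⟨c + b.c, b.l⟩
    | ⟨c, (x, e) :: t⟩ => ⟨c, b.l ++ (x, e + b.c) :: t⟩⟩

theorem one_def : (1 : W X Y) = ⟨0, []⟩ := rfl

theorem mul_nil (c d : Lex (Y →₀ ℕ)) (m : List (X × Lex (Y →₀ ℕ))) :
    (⟨c, []⟩ : W X Y) * ⟨d, m⟩ = ⟨c + d, m⟩ := rfl

theorem mul_cons (c : Lex (Y →₀ ℕ)) (x : X) (e : Lex (Y →₀ ℕ)) (t : List (X × Lex (Y →₀ ℕ)))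
    (d : Lex (Y →₀ ℕ)) (m : List (X × Lex (Y →₀ ℕ))) :
    (⟨c, (x, e) :: t⟩ : W X Y) * ⟨d, m⟩ = ⟨c, m ++ (x, e + d) :: t⟩ := rfl

noncomputable instance : Monoid (W X Y) where
  mul_assoc a b c := by
    obtain ⟨c₁, l₁⟩ := a; obtain ⟨c₂, l₂⟩ := b; obtain ⟨c₃, l₃⟩ := c
    cases l₁ with
    | nil =>
      cases l₂ with
      | nil => simp [mul_nil, add_assoc]
      | cons p t =>
        obtain ⟨x, e⟩ := p
        simp [mul_nil, mul_cons]
    | cons p t =>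
      obtain ⟨x, e⟩ := p
      cases l₂ with
      | nil => simp [mul_nil, mul_cons, add_assoc]
      | cons q s =>
        obtain ⟨y, f⟩ := q
        simp [mul_nil, mul_cons, List.append_assoc]
  one_mul a := by
    obtain ⟨c, l⟩ := a
    rw [one_def, mul_nil, zero_add]
  mul_one a := by
    obtain ⟨c, l⟩ := a
    cases l with
    | nil => rw [one_def, mul_nil, add_zero]
    | cons p t =>
      obtain ⟨x, e⟩ := p
      rw [one_def, mul_cons, add_zero, List.nil_append]

/-! ### The embedding of the coproduct into `W` -/

/-- The coproduct monoid. -/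
abbrev MM (X Y : Type*) := Monoid.Coprod (Multiplicative (Y →₀ ℕ)) (FreeMonoid X)

/-- Inclusion of a commutative part into the coproduct. -/
noncomputable def inlC (c : Lex (Y →₀ ℕ)) : MM X Y :=
  Monoid.Coprod.inl (Multiplicative.ofAdd (ofLex c))

theorem inlC_add (c d : Lex (Y →₀ ℕ)) : (inlC (c + d) : MM X Y) = inlC c * inlC d := by
  unfold inlC
  rw [← map_mul]
  rfl

theorem inlC_zero : (inlC 0 : MM X Y) = 1 := by
  rw [inlC]
  exact map_one _

/-- Interpretation of a reversed letter list in the coproduct. -/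
noncomputable def gl : List (X × Lex (Y →₀ ℕ)) → MM X Y
  | [] => 1
  | (x, e) :: t => gl t * (Monoid.Coprod.inr (FreeMonoid.of x) * inlC e)

theorem gl_nil : (gl [] : MM X Y) = 1 := rfl

theorem gl_cons (x : X) (e : Lex (Y →₀ ℕ)) (t : List (X × Lex (Y →₀ ℕ))) :
    gl ((x, e) :: t) = gl t * (Monoid.Coprod.inr (FreeMonoid.of x) * inlC e) := rfl

theorem gl_append (m n : List (X × Lex (Y →₀ ℕ))) : gl (m ++ n) = gl n * gl m := by
  induction m with
  | nil => rw [List.nil_append, gl_nil, mul_one]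
  | cons p t ih =>
    obtain ⟨x, e⟩ := p
    rw [List.cons_append, gl_cons, gl_cons, ih, mul_assoc]

/-- The normal-form evaluation homomorphism `W → MM`. -/
noncomputable def g : W X Y →* MM X Y where
  toFun w := inlC w.c * gl w.l
  map_one' := by
    show inlC 0 * gl [] = 1
    rw [gl_nil, inlC_zero, mul_one]
  map_mul' a b := by
    obtain ⟨c₁, l₁⟩ := a; obtain ⟨c₂, l₂⟩ := b
    cases l₁ with
    | nil =>
      show inlC (c₁ + c₂) * gl l₂ = (inlC c₁ * gl []) * (inlC c₂ * gl l₂)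
      simp only [gl_nil, mul_one, inlC_add, mul_assoc]
    | cons p t =>
      obtain ⟨x, e⟩ := p
      show inlC c₁ * gl (l₂ ++ (x, e + c₂) :: t)
          = (inlC c₁ * gl ((x, e) :: t)) * (inlC c₂ * gl l₂)
      rw [gl_append, gl_cons, gl_cons, inlC_add]
      simp only [mul_assoc]

theorem g_apply (w : W X Y) : g w = inlC w.c * gl w.l := rfl

theorem g_mk (c : Lex (Y →₀ ℕ)) (l : List (X × Lex (Y →₀ ℕ))) :
    g (⟨c, l⟩ : W X Y) = inlC c * gl l := rfl

/-- The canonical homomorphism `[Y] → W`. -/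
noncomputable def phiA : Multiplicative (Y →₀ ℕ) →* W X Y where
  toFun a := ⟨toLex a.toAdd, []⟩
  map_one' := rfl
  map_mul' _ _ := rfl

theorem phiA_apply (a : Multiplicative (Y →₀ ℕ)) :
    (phiA a : W X Y) = ⟨toLex a.toAdd, []⟩ := rfl

/-- The canonical homomorphism `⟨X⟩ → W`. -/
noncomputable def phiB : FreeMonoid X →* W X Y :=
  FreeMonoid.lift fun x => (⟨0, [(x, 0)]⟩ : W X Y)

/-- The homomorphism `MM → W` sending each element to its normal form. -/
noncomputable def f : MM X Y →* W X Y := Monoid.Coprod.lift phiA phiB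

theorem g_comp_f : (g.comp (f : MM X Y →* W X Y)) = MonoidHom.id _ := by
  apply Monoid.Coprod.hom_ext
  · apply MonoidHom.ext
    intro a
    show g (f (Monoid.Coprod.inl a)) = Monoid.Coprod.inl a
    rw [f, Monoid.Coprod.lift_apply_inl, phiA_apply, g_mk, gl_nil, mul_one]
    rfl
  · apply FreeMonoid.hom_eq
    intro x
    show g (f (Monoid.Coprod.inr (FreeMonoid.of x))) = Monoid.Coprod.inr (FreeMonoid.of x)
    rw [f, Monoid.Coprod.lift_apply_inr]
    show g (phiB (FreeMonoid.of x)) = Monoid.Coprod.inr (FreeMonoid.of x)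
    rw [phiB, FreeMonoid.lift_eval_of, g_mk, gl_cons, gl_nil, inlC_zero, one_mul,
      one_mul, mul_one]

theorem f_injective : Function.Injective (f : MM X Y → W X Y) := by
  intro a b h
  have ha : g (f a) = a := DFunLike.congr_fun g_comp_f a
  have hb : g (f b) = b := DFunLike.congr_fun g_comp_f b
  rw [← ha, ← hb, h]

/-! ### The order on `W` -/

section Order

variable [LinearOrder X] [WellFoundedLT X] [LinearOrder Y] [WellFoundedGT Y]

/-- The reversed-and-lexified letter list (the forward word). -/
def RL (l : List (X × Lex (Y →₀ ℕ))) : List (X ×ₗ Lex (Y →₀ ℕ)) :=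
  (l.map fun p => toLex p).reverse

theorem RL_length (l : List (X × Lex (Y →₀ ℕ))) : (RL l).length = l.length := by
  simp [RL]

theorem RL_cons (x : X) (e : Lex (Y →₀ ℕ)) (t : List (X × Lex (Y →₀ ℕ))) :
    RL ((x, e) :: t) = RL t ++ [toLex (x, e)] := by
  rw [RL, RL, List.map_cons, List.reverse_cons]

theorem RL_append (m n : List (X × Lex (Y →₀ ℕ))) : RL (m ++ n) = RL n ++ RL m := by
  rw [RL, RL, RL, List.map_append, List.reverse_append]

theorem RL_injective : Function.Injective (RL (X := X) (Y := Y)) := by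
  intro l₁ l₂ h
  rw [RL, RL] at h
  have := List.reverse_injective h
  exact List.map_injective_iff.mpr (fun a b hab => toLex_inj.mp hab) this

/-- The grading/comparison key of a normal form: length, then leading commutative part,
then the forward letter list lexicographically. -/
def key (w : W X Y) : ℕ ×ₗ (Lex (Y →₀ ℕ) ×ₗ List (X ×ₗ Lex (Y →₀ ℕ))) :=
  toLex (w.l.length, toLex (w.c, RL w.l))

theorem key_injective : Function.Injective (key (X := X) (Y := Y)) := by
  rintro ⟨c₁, l₁⟩ ⟨c₂, l₂⟩ h
  rw [key, key, toLex_inj, Prod.mk.injEq, toLex_inj, Prod.mk.injEq] at h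
  obtain ⟨-, h₂, h₃⟩ := h
  simp only [W.mk.injEq]
  exact ⟨h₂, RL_injective h₃⟩

noncomputable instance : LinearOrder (W X Y) := LinearOrder.lift' key key_injective

theorem lt_def {a b : W X Y} : a < b ↔ key a < key b := Iff.rfl

theorem lt_iff {a b : W X Y} :
    a < b ↔ a.l.length < b.l.length ∨ (a.l.length = b.l.length ∧
      (a.c < b.c ∨ (a.c = b.c ∧ List.Lex (· < ·) (RL a.l) (RL b.l)))) := by
  rw [lt_def, key, key, Prod.Lex.lt_iff]
  constructor
  · rintro (h | ⟨h₁, h₂⟩)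
    · exact Or.inl h
    · rw [Prod.Lex.lt_iff] at h₂
      exact Or.inr ⟨h₁, h₂⟩
  · rintro (h | ⟨h₁, h₂⟩)
    · exact Or.inl h
    · exact Or.inr ⟨h₁, Prod.Lex.lt_iff.mpr h₂⟩

theorem entry_lt_iff {p q : X × Lex (Y →₀ ℕ)} :
    (toLex p : X ×ₗ Lex (Y →₀ ℕ)) < toLex q ↔ p.1 < q.1 ∨ (p.1 = q.1 ∧ p.2 < q.2) :=
  Prod.Lex.lt_iff

theorem prodlex_of {α β : Type*} {r : α → α → Prop} {s : β → β → Prop} {a₁ a₂ : α}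
    {b₁ b₂ : β} (h : r a₁ a₂ ∨ (a₁ = a₂ ∧ s b₁ b₂)) : Prod.Lex r s (a₁, b₁) (a₂, b₂) := by
  rcases h with h | ⟨rfl, h⟩
  exacts [Prod.Lex.left _ _ h, Prod.Lex.right _ h]

/-- Every nonempty subset of `W` has a minimum. -/
theorem exists_min (s : Set (W X Y)) (hs : s.Nonempty) : ∃ m ∈ s, ∀ x ∈ s, m ≤ x := by
  classical
  obtain ⟨a₀, ha₀⟩ := hs
  have hL : {n : ℕ | ∃ w ∈ s, w.l.length = n}.Nonempty := ⟨a₀.l.length, a₀, ha₀, rfl⟩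
  obtain ⟨n, ⟨w₀, hw₀, hw₀n⟩, hnmin⟩ :=
    (wellFounded_lt : WellFounded ((· < ·) : ℕ → ℕ → Prop)).has_min _ hL
  set T := {w : W X Y // w.l.length = n} with hT
  have wfp : WellFounded (Prod.Lex ((· < ·) : Lex (Y →₀ ℕ) → Lex (Y →₀ ℕ) → Prop)
      (fun a b : {l : List (X ×ₗ Lex (Y →₀ ℕ)) // l.length = n} =>
        List.Lex (· < ·) a.1 b.1)) :=
    (wellFounded_lt).prod_lex (lex_fixed_wf wellFounded_lt n)
  have wfT : WellFounded (fun a b : T => a.1 < b.1) := by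
    refine Subrelation.wf (r := InvImage (Prod.Lex ((· < ·) : Lex (Y →₀ ℕ) → Lex (Y →₀ ℕ) → Prop)
        (fun a b : {l : List (X ×ₗ Lex (Y →₀ ℕ)) // l.length = n} =>
          List.Lex (· < ·) a.1 b.1))
        (fun w : T => (w.1.c, ⟨RL w.1.l, by rw [RL_length, w.2]⟩))) ?_ (InvImage.wf _ wfp)
    intro a b hab
    rw [lt_iff] at hab
    rcases hab with h | ⟨-, h⟩
    · rw [a.2, b.2] at h
      exact absurd h (lt_irrefl n)
    · exact prodlex_of h
  have hsT : {w : T | w.1 ∈ s}.Nonempty := ⟨⟨w₀, hw₀n⟩, hw₀⟩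
  obtain ⟨m, hm, hmmin⟩ := wfT.has_min _ hsT
  refine ⟨m.1, hm, fun x hx => ?_⟩
  by_cases hxn : x.l.length = n
  · exact le_of_not_gt fun hlt => hmmin ⟨x, hxn⟩ hx hlt
  · have h1 : ¬x.l.length < n := hnmin _ ⟨x, hx, rfl⟩
    have h2 : n < x.l.length := lt_of_le_of_ne (le_of_not_gt h1) (Ne.symm hxn)
    refine le_of_lt (lt_iff.mpr (Or.inl ?_))
    rw [m.2]
    exact h2

theorem mul_lt_mul_right'' {a b : W X Y} (h : a < b) (w : W X Y) : a * w < b * w := by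
  obtain ⟨c₁, l₁⟩ := a; obtain ⟨c₂, l₂⟩ := b; obtain ⟨d, m⟩ := w
  rw [lt_iff] at h ⊢
  simp only at h
  cases l₁ with
  | nil =>
    cases l₂ with
    | nil =>
      rw [mul_nil, mul_nil]
      rcases h with h | ⟨-, h | ⟨-, h⟩⟩
      · exact absurd h (lt_irrefl _)
      · exact Or.inr ⟨rfl, Or.inl (add_lt_add_left h d)⟩
      · exact absurd h List.not_lex_nil
    | cons q sl =>
      obtain ⟨y, f⟩ := q
      rw [mul_nil, mul_cons]
      refine Or.inl ?_
      show m.length < (m ++ (y, f + d) :: sl).length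
      rw [List.length_append, List.length_cons]
      omega
  | cons p t =>
    obtain ⟨x, e⟩ := p
    cases l₂ with
    | nil =>
      exfalso
      rcases h with h | ⟨h, -⟩ <;> simp at h
    | cons q sl =>
      obtain ⟨y, f⟩ := q
      rw [mul_cons, mul_cons]
      simp only [List.length_cons] at h
      rcases h with h | ⟨hlen, h | ⟨hc, h⟩⟩
      · refine Or.inl ?_
        show (m ++ (x, e + d) :: t).length < (m ++ (y, f + d) :: sl).length
        rw [List.length_append, List.length_cons, List.length_append, List.length_cons]
        omega
      · refine Or.inr ⟨?_, Or.inl h⟩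
        show (m ++ (x, e + d) :: t).length = (m ++ (y, f + d) :: sl).length
        rw [List.length_append, List.length_cons, List.length_append, List.length_cons]
        omega
      · refine Or.inr ⟨?_, Or.inr ⟨hc, ?_⟩⟩
        · show (m ++ (x, e + d) :: t).length = (m ++ (y, f + d) :: sl).length
          rw [List.length_append, List.length_cons, List.length_append, List.length_cons]
          omega
        · show List.Lex (· < ·) (RL (m ++ (x, e + d) :: t)) (RL (m ++ (y, f + d) :: sl))
          rw [RL_append, RL_append, RL_cons, RL_cons, List.append_assoc, List.append_assoc,
            List.singleton_append, List.singleton_append]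
          rw [RL_cons, RL_cons] at h
          have hlen' : (RL t).length = (RL sl).length := by
            rw [RL_length, RL_length]; omega
          rw [lex_append_iff hlen'] at h
          rw [lex_append_iff hlen']
          rcases h with h | ⟨heq, h⟩
          · exact Or.inl h
          · refine Or.inr ⟨heq, ?_⟩
            rcases lex_cons_iff'.mp h with h' | ⟨h', h''⟩
            · rcases entry_lt_iff.mp h' with hx | ⟨hx, he⟩
              · exact List.Lex.rel (entry_lt_iff.mpr (Or.inl hx))
              · exact List.Lex.rel (entry_lt_iff.mpr (Or.inr ⟨hx, add_lt_add_left he d⟩))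
            · exact absurd h'' List.not_lex_nil

theorem mul_lt_mul_left'' {a b : W X Y} (h : a < b) (w : W X Y) : w * a < w * b := by
  obtain ⟨c₁, l₁⟩ := a; obtain ⟨c₂, l₂⟩ := b; obtain ⟨d, m⟩ := w
  rw [lt_iff] at h ⊢
  simp only at h
  cases m with
  | nil =>
    rw [mul_nil, mul_nil]
    rcases h with h | ⟨hlen, h | ⟨hc, h⟩⟩
    · exact Or.inl h
    · exact Or.inr ⟨hlen, Or.inl (add_lt_add_right h d)⟩
    · refine Or.inr ⟨hlen, Or.inr ⟨?_, h⟩⟩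
      show d + c₁ = d + c₂
      rw [hc]
  | cons q sl =>
    obtain ⟨y, gc⟩ := q
    rw [mul_cons, mul_cons]
    rcases h with h | ⟨hlen, h | ⟨hc, h⟩⟩
    · refine Or.inl ?_
      show (l₁ ++ (y, gc + c₁) :: sl).length < (l₂ ++ (y, gc + c₂) :: sl).length
      rw [List.length_append, List.length_cons, List.length_append, List.length_cons]
      omega
    · refine Or.inr ⟨?_, Or.inr ⟨rfl, ?_⟩⟩
      · show (l₁ ++ (y, gc + c₁) :: sl).length = (l₂ ++ (y, gc + c₂) :: sl).length
        rw [List.length_append, List.length_cons, List.length_append, List.length_cons]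
        omega
      · show List.Lex (· < ·) (RL (l₁ ++ (y, gc + c₁) :: sl)) (RL (l₂ ++ (y, gc + c₂) :: sl))
        rw [RL_append, RL_append, RL_cons, RL_cons, List.append_assoc, List.append_assoc,
          List.singleton_append, List.singleton_append]
        rw [lex_append_iff rfl]
        exact Or.inr ⟨rfl, List.Lex.rel (entry_lt_iff.mpr
          (Or.inr ⟨rfl, add_lt_add_right h gc⟩))⟩
    · refine Or.inr ⟨?_, Or.inr ⟨rfl, ?_⟩⟩
      · show (l₁ ++ (y, gc + c₁) :: sl).length = (l₂ ++ (y, gc + c₂) :: sl).length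
        rw [List.length_append, List.length_cons, List.length_append, List.length_cons]
        omega
      · show List.Lex (· < ·) (RL (l₁ ++ (y, gc + c₁) :: sl)) (RL (l₂ ++ (y, gc + c₂) :: sl))
        rw [RL_append, RL_append, RL_cons, RL_cons, List.append_assoc, List.append_assoc,
          List.singleton_append, List.singleton_append]
        rw [lex_append_iff rfl]
        have hc' : c₁ = c₂ := hc
        rw [hc']
        exact Or.inr ⟨rfl, List.Lex.cons h⟩

end Order

end Stmt8Aux

open Stmt8Aux in
/-- For any (possibly empty) sets `X` and `Y`, the monoid coproduct
`[Y] ∗ ⟨X⟩` of the free commutative monoid on `Y` and the free monoid on `X` admits a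
linear order that is a well-order and strictly compatible with multiplication on both
sides. -/
theorem stmt8 (X Y : Type*) :
    IsStrictWellOrderedMonoid (Monoid.Coprod (Multiplicative (Y →₀ ℕ)) (FreeMonoid X)) := by
  letI : LinearOrder X := LinearOrder.lift'
    (fun x => Ordinal.typein (@WellOrderingRel X) x)
    (fun a b h => Ordinal.typein_injective _ h)
  haveI : WellFoundedLT X :=
    ⟨InvImage.wf (fun x => Ordinal.typein (@WellOrderingRel X) x) wellFounded_lt⟩
  letI : LinearOrder Y := LinearOrder.lift'
    (fun y => OrderDual.toDual (Ordinal.typein (@WellOrderingRel Y) y))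
    (fun a b h => Ordinal.typein_injective _ (OrderDual.toDual.injective h))
  haveI : WellFoundedGT Y :=
    ⟨InvImage.wf (fun y => Ordinal.typein (@WellOrderingRel Y) y) wellFounded_lt⟩
  refine ⟨LinearOrder.lift' (f : MM X Y → W X Y) f_injective, ?_, ?_⟩
  · intro s hs
    obtain ⟨m', hm'mem, hm'min⟩ := exists_min ((f : MM X Y → W X Y) '' s) (hs.image _)
    obtain ⟨m, hm, rfl⟩ := hm'mem
    exact ⟨m, hm, fun x hx => hm'min (f x) ⟨x, hx, rfl⟩⟩
  · intro a b c hab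
    have hab' : f a < f b := hab
    constructor
    · show f (a * c) < f (b * c)
      rw [map_mul, map_mul]
      exact mul_lt_mul_right'' hab' (f c)
    · show f (c * a) < f (c * b)
      rw [map_mul, map_mul]
      exact mul_lt_mul_left'' hab' (f c)
end

section
/- Let X and Y be (possibly empty) sets and let M = [Y] ∗ ⟨X⟩ be the monoid coproduct of the free commutative monoid on Y and the free monoid on X. Then in the monoid semiring ℕ[M] (MonoidAlgebra ℕ M): (1) multiplication by nonzero elements is cancellative, i.e., for f, g, h ∈ ℕ[M] with h ≠ 0, fh = gh implies f = g and hf = hg implies f = g; and (2) roots are unique, i.e., if f^n = g^n for some integer n ≥ 1 then f = g. -/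
open Finsupp Function

set_option linter.unusedSectionVars false

namespace Stmt9

instance coeFunMA {k G : Type*} [Semiring k] :
    CoeFun (MonoidAlgebra k G) (fun _ => G → k) := ⟨fun f => f.coeff⟩

/-- If the only factorization of `x * y` with factors in the supports is `(x, y)`,
then the convolution coefficient at `x * y` is the product of coefficients. -/
theorem mul_apply_pair {k G : Type*} [Semiring k] [Monoid G]
    (f g : MonoidAlgebra k G) (x y : G)
    (h : ∀ a ∈ f.coeff.support, ∀ b ∈ g.coeff.support, a * b = x * y → a = x ∧ b = y) :
    (f * g) (x * y) = f x * g y := by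
  classical
  rw [MonoidAlgebra.mul_apply]
  simp only [Finsupp.sum]
  have step : ∀ a ∈ f.coeff.support,
      (∑ b ∈ g.coeff.support, if a * b = x * y then f a * g b else 0)
        = if a = x then f a * g y else 0 := by
    intro a ha
    by_cases hax : a = x
    · subst hax
      rw [if_pos rfl]
      have h2 : ∀ b ∈ g.coeff.support,
          (if a * b = a * y then f a * g b else 0) = if b = y then f a * g b else 0 := by
        intro b hb
        by_cases hby : b = y
        · subst hby; simp
        · rw [if_neg hby, if_neg fun hab => hby (h a ha b hb hab).2]
      rw [Finset.sum_congr rfl h2, Finset.sum_ite_eq' g.coeff.support y fun b => f a * g b]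
      by_cases hy : y ∈ g.coeff.support
      · rw [if_pos hy]
      · rw [if_neg hy, Finsupp.notMem_support_iff.mp hy, mul_zero]
    · rw [if_neg hax]
      exact Finset.sum_eq_zero fun b hb => if_neg fun hab => hax (h a ha b hb hab).1
  rw [Finset.sum_congr rfl step, Finset.sum_ite_eq' f.coeff.support x fun a => f a * g y]
  by_cases hx : x ∈ f.coeff.support
  · rw [if_pos hx]
  · rw [if_neg hx, Finsupp.notMem_support_iff.mp hx, zero_mul]

section Ordered

variable {T : Type*} [Monoid T] [LinearOrder T]
    [CovariantClass T T (· * ·) (· < ·)] [CovariantClass T T (Function.swap (· * ·)) (· < ·)]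

theorem my_mul_le_mul_left (c : T) {a b : T} (h : a ≤ b) : c * a ≤ c * b := by
  rcases h.lt_or_eq with h | h
  · exact (mul_lt_mul_right h c).le
  · rw [h]

theorem my_mul_le_mul_right (c : T) {a b : T} (h : a ≤ b) : a * c ≤ b * c := by
  rcases h.lt_or_eq with h | h
  · exact (mul_lt_mul_left h c).le
  · rw [h]

variable {k : Type*} [Semiring k]

theorem apply_min_mul (f g : MonoidAlgebra k T) {mf mg : T}
    (hf : ∀ a ∈ f.coeff.support, mf ≤ a) (hg : ∀ b ∈ g.coeff.support, mg ≤ b) :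
    (f * g) (mf * mg) = f mf * g mg := by
  apply mul_apply_pair
  intro a ha b hb hab
  have hax : a = mf := by
    rcases (hf a ha).lt_or_eq with hlt | heq
    · exfalso
      have : mf * mg < a * b :=
        lt_of_lt_of_le (mul_lt_mul_left hlt mg) (my_mul_le_mul_left a (hg b hb))
      rw [hab] at this; exact lt_irrefl _ this
    · exact heq.symm
  subst hax
  have hby : b = mg := by
    rcases (hg b hb).lt_or_eq with hlt | heq
    · exfalso
      have : a * mg < a * b := mul_lt_mul_right hlt a
      rw [hab] at this; exact lt_irrefl _ this
    · exact heq.symm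
  exact ⟨rfl, hby⟩

theorem support_min_mul (f g : MonoidAlgebra k T) {mf mg : T}
    (hf : ∀ a ∈ f.coeff.support, mf ≤ a) (hg : ∀ b ∈ g.coeff.support, mg ≤ b) :
    ∀ c ∈ (f * g).coeff.support, mf * mg ≤ c := by
  classical
  intro c hc
  obtain ⟨a, ha, b, hb, rfl⟩ := Finset.mem_mul.mp (MonoidAlgebra.support_coeff_mul_subset f g hc)
  exact le_trans (my_mul_le_mul_right mg (hf a ha)) (my_mul_le_mul_left a (hg b hb))

theorem apply_min_pow (f : MonoidAlgebra k T) {mf : T} (hf : ∀ a ∈ f.coeff.support, mf ≤ a) (n : ℕ) :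
    ((f ^ n) (mf ^ n) = (f mf) ^ n) ∧ ∀ c ∈ (f ^ n).coeff.support, mf ^ n ≤ c := by
  induction n with
  | zero =>
    simp only [pow_zero]
    constructor
    · rw [MonoidAlgebra.one_def, MonoidAlgebra.coeff_single, Finsupp.single_eq_same]
    · intro c hc
      rw [MonoidAlgebra.one_def] at hc
      have := Finsupp.support_single_subset hc
      simp only [Finset.mem_singleton] at this
      simp [this]
  | succ n ih =>
    have h1 := apply_min_mul (f ^ n) f ih.2 hf
    have h2 := support_min_mul (f ^ n) f ih.2 hf
    rw [pow_succ, pow_succ, pow_succ]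
    exact ⟨by rw [h1, ih.1], h2⟩

theorem min'_le_forall {α : Type*} [LinearOrder α] (s : Finset α) (hs : s.Nonempty) :
    ∀ b ∈ s, s.min' hs ≤ b := fun b hb => s.min'_le b hb

theorem mul_ne_zero' {F H : MonoidAlgebra ℤ T} (hF : F ≠ 0) (hH : H ≠ 0) : F * H ≠ 0 := by
  classical
  have hFs : F.coeff.support.Nonempty := Finsupp.support_nonempty_iff.mpr (MonoidAlgebra.coeff_eq_zero.not.mpr hF)
  have hHs : H.coeff.support.Nonempty := Finsupp.support_nonempty_iff.mpr (MonoidAlgebra.coeff_eq_zero.not.mpr hH)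
  have key := apply_min_mul F H (min'_le_forall _ hFs) (min'_le_forall _ hHs)
  intro h0
  rw [h0] at key
  have hz : F (F.coeff.support.min' hFs) * H (H.coeff.support.min' hHs) = 0 := by
    simpa using key.symm
  rcases mul_eq_zero.mp hz with h | h
  · exact Finsupp.mem_support_iff.mp (F.coeff.support.min'_mem hFs) h
  · exact Finsupp.mem_support_iff.mp (H.coeff.support.min'_mem hHs) h

theorem my_mul_right_cancel {F G H : MonoidAlgebra ℤ T} (hH : H ≠ 0) (h : F * H = G * H) :
    F = G := by
  by_contra hne
  have h0 : (F - G) * H = 0 := by rw [sub_mul, h, sub_self]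
  exact mul_ne_zero' (sub_ne_zero_of_ne hne) hH h0

theorem my_mul_left_cancel {F G H : MonoidAlgebra ℤ T} (hH : H ≠ 0) (h : H * F = H * G) :
    F = G := by
  by_contra hne
  have h0 : H * (F - G) = 0 := by rw [mul_sub, h, sub_self]
  exact mul_ne_zero' hH (sub_ne_zero_of_ne hne) h0

theorem telescope {R : Type*} [Ring R] (F G : R) (n : ℕ) :
    (∑ i ∈ Finset.range n, F ^ i * (F - G) * G ^ (n - 1 - i)) = F ^ n - G ^ n := by
  induction n with
  | zero => simp
  | succ m ihm =>
    rw [Finset.sum_range_succ]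
    have step : ∀ i ∈ Finset.range m,
        F ^ i * (F - G) * G ^ (m + 1 - 1 - i) = F ^ i * (F - G) * G ^ (m - 1 - i) * G := by
      intro i hi
      have hi' := Finset.mem_range.mp hi
      rw [mul_assoc (F ^ i * (F - G)), ← pow_succ]
      congr 2
      omega
    rw [Finset.sum_congr rfl step, ← Finset.sum_mul, ihm]
    have h1 : m + 1 - 1 - m = 0 := by omega
    rw [h1, pow_zero, mul_one, sub_mul, mul_sub, pow_succ, pow_succ]
    abel

theorem pow_eq_pow {F G : MonoidAlgebra ℤ T}
    (hFpos : ∀ t, 0 ≤ F t) (hGpos : ∀ t, 0 ≤ G t) {n : ℕ} (hn : 1 ≤ n)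
    (h : F ^ n = G ^ n) : F = G := by
  classical
  have hzero : ∀ {A B : MonoidAlgebra ℤ T}, A ^ n = B ^ n → A = 0 → B = 0 := by
    intro A B hAB hA
    by_contra hB
    have hBs : B.coeff.support.Nonempty := Finsupp.support_nonempty_iff.mpr (MonoidAlgebra.coeff_eq_zero.not.mpr hB)
    have hpow := (apply_min_pow B (min'_le_forall _ hBs) n).1
    rw [← hAB, hA, zero_pow (by omega : n ≠ 0)] at hpow
    have h0 : (B (B.coeff.support.min' hBs)) ^ n = 0 := by simpa using hpow.symm
    exact Finsupp.mem_support_iff.mp (B.coeff.support.min'_mem hBs)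
      (pow_eq_zero_iff (by omega : n ≠ 0) |>.mp h0)
  by_cases hF : F = 0
  · rw [hF, hzero h hF]
  by_cases hG : G = 0
  · rw [hG, hzero h.symm hG]
  by_contra hne
  set D := F - G with hD
  have hDne : D ≠ 0 := sub_ne_zero_of_ne hne
  have hFs : F.coeff.support.Nonempty := Finsupp.support_nonempty_iff.mpr (MonoidAlgebra.coeff_eq_zero.not.mpr hF)
  have hGs : G.coeff.support.Nonempty := Finsupp.support_nonempty_iff.mpr (MonoidAlgebra.coeff_eq_zero.not.mpr hG)
  have hDs : D.coeff.support.Nonempty := Finsupp.support_nonempty_iff.mpr (MonoidAlgebra.coeff_eq_zero.not.mpr hDne)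
  set μ := F.coeff.support.min' hFs with hμ
  set ν := G.coeff.support.min' hGs with hν
  set m₀ := D.coeff.support.min' hDs with hm₀
  have hFμ : 0 < F μ :=
    lt_of_le_of_ne (hFpos μ) (Ne.symm (Finsupp.mem_support_iff.mp (F.coeff.support.min'_mem hFs)))
  have hGν : 0 < G ν :=
    lt_of_le_of_ne (hGpos ν) (Ne.symm (Finsupp.mem_support_iff.mp (G.coeff.support.min'_mem hGs)))
  have hDm₀ : D m₀ ≠ 0 := Finsupp.mem_support_iff.mp (D.coeff.support.min'_mem hDs)
  -- the sum vanishes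
  have tsum : (∑ i ∈ Finset.range n, F ^ i * D * G ^ (n - 1 - i)) = 0 := by
    rw [hD, telescope, h, sub_self]
  -- coefficients of the summands
  set t : ℕ → T := fun i => μ ^ i * m₀ * ν ^ (n - 1 - i) with ht
  have hcoeff : ∀ i, (F ^ i * D * G ^ (n - 1 - i)) (t i)
      = (F μ) ^ i * D m₀ * (G ν) ^ (n - 1 - i) := by
    intro i
    have hFi := apply_min_pow F (min'_le_forall _ hFs) i
    have hGi := apply_min_pow G (min'_le_forall _ hGs) (n - 1 - i)
    have hin := apply_min_mul (F ^ i) D hFi.2 (min'_le_forall _ hDs)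
    have hin2 := support_min_mul (F ^ i) D hFi.2 (min'_le_forall _ hDs)
    have hout := apply_min_mul (F ^ i * D) (G ^ (n - 1 - i)) hin2 hGi.2
    rw [ht]
    rw [hout, hin, hFi.1, hGi.1]
  have hsupp : ∀ i, ∀ c ∈ (F ^ i * D * G ^ (n - 1 - i)).coeff.support, t i ≤ c := by
    intro i
    have hFi := apply_min_pow F (min'_le_forall _ hFs) i
    have hGi := apply_min_pow G (min'_le_forall _ hGs) (n - 1 - i)
    have hin2 := support_min_mul (F ^ i) D hFi.2 (min'_le_forall _ hDs)
    exact support_min_mul (F ^ i * D) (G ^ (n - 1 - i)) hin2 hGi.2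
  obtain ⟨i₀, hi₀mem, hi₀min⟩ :=
    Finset.exists_min_image (Finset.range n) t ⟨0, Finset.mem_range.mpr (by omega)⟩
  set s := t i₀ with hs
  have eval0 : (∑ i ∈ Finset.range n, (F ^ i * D * G ^ (n - 1 - i)) s) = 0 := by
    rw [← Finsupp.finsetSum_apply, ← MonoidAlgebra.coeff_sum, tsum]; rfl
  have hterm : ∀ i ∈ Finset.range n, (F ^ i * D * G ^ (n - 1 - i)) s
      = D m₀ * (if t i = s then (F μ) ^ i * (G ν) ^ (n - 1 - i) else 0) := by
    intro i hi
    by_cases hts : t i = s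
    · rw [if_pos hts, ← hts, hcoeff i]; ring
    · rw [if_neg hts, mul_zero]
      by_contra hne0
      have hmem : s ∈ (F ^ i * D * G ^ (n - 1 - i)).coeff.support := Finsupp.mem_support_iff.mpr hne0
      exact hts (le_antisymm (hsupp i s hmem) (hi₀min i hi))
  rw [Finset.sum_congr rfl hterm, ← Finset.mul_sum] at eval0
  have hpos : 0 < ∑ i ∈ Finset.range n,
      (if t i = s then (F μ) ^ i * (G ν) ^ (n - 1 - i) else 0) := by
    apply Finset.sum_pos'
    · intro i _
      split
      · positivity
      · exact le_refl 0
    · exact ⟨i₀, hi₀mem, by rw [if_pos rfl]; positivity⟩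
  rcases mul_eq_zero.mp eval0 with h' | h'
  · exact hDm₀ h'
  · exact absurd h' (ne_of_gt hpos)

end Ordered

/-! ### A degree framework -/

section Pd

variable {N : Type*} [Monoid N] (d : N → ℕ)

/-- `f` has "leading term" `x` with coefficient `1`, all other terms of lower degree. -/
def Pd (f : MonoidAlgebra ℕ N) (x : N) : Prop :=
  f x = 1 ∧ ∀ m, f m ≠ 0 → m = x ∨ d m < d x

theorem Pd.mul (hd : ∀ a b : N, d (a * b) = d a + d b) {f g : MonoidAlgebra ℕ N} {x y : N}
    (hf : Pd d f x) (hg : Pd d g y) : Pd d (f * g) (x * y) := by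
  classical
  have cond : ∀ a ∈ f.coeff.support, ∀ b ∈ g.coeff.support, a * b = x * y → a = x ∧ b = y := by
    intro a ha b hb hab
    have hda : d a ≤ d x := by
      rcases hf.2 a (Finsupp.mem_support_iff.mp ha) with rfl | hlt
      exacts [le_refl _, hlt.le]
    have hdb : d b ≤ d y := by
      rcases hg.2 b (Finsupp.mem_support_iff.mp hb) with rfl | hlt
      exacts [le_refl _, hlt.le]
    have hsum : d a + d b = d x + d y := by
      have := congrArg d hab; rwa [hd, hd] at this
    have hax : a = x := by
      rcases hf.2 a (Finsupp.mem_support_iff.mp ha) with rfl | hlt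
      · rfl
      · omega
    have hby : b = y := by
      rcases hg.2 b (Finsupp.mem_support_iff.mp hb) with rfl | hlt
      · rfl
      · omega
    exact ⟨hax, hby⟩
  constructor
  · rw [mul_apply_pair f g x y cond, hf.1, hg.1, one_mul]
  · intro m hm
    obtain ⟨a, ha, b, hb, rfl⟩ :=
      Finset.mem_mul.mp (MonoidAlgebra.support_coeff_mul_subset f g (Finsupp.mem_support_iff.mpr hm))
    rcases hf.2 a (Finsupp.mem_support_iff.mp ha) with rfl | hda
    · rcases hg.2 b (Finsupp.mem_support_iff.mp hb) with rfl | hdb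
      · exact Or.inl rfl
      · right; rw [hd, hd]; omega
    · right; rw [hd, hd]
      have hdb : d b ≤ d y := by
        rcases hg.2 b (Finsupp.mem_support_iff.mp hb) with rfl | hlt
        exacts [le_refl _, hlt.le]
      omega

theorem Pd.one : Pd d (1 : MonoidAlgebra ℕ N) 1 := by
  constructor
  · rw [MonoidAlgebra.one_def, MonoidAlgebra.coeff_single, Finsupp.single_eq_same]
  · intro m hm
    left
    by_contra hne
    rw [MonoidAlgebra.one_def] at hm
    exact hm (Finsupp.single_eq_of_ne' (Ne.symm hne))

theorem Pd.gen (hd1 : d 1 = 0) {g : N} (hg : d g = 1) :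
    Pd d (1 + MonoidAlgebra.single g 1 : MonoidAlgebra ℕ N) g := by
  have hg1 : g ≠ 1 := fun h => by rw [h, hd1] at hg; omega
  constructor
  · rw [MonoidAlgebra.coeff_add, Finsupp.add_apply, MonoidAlgebra.one_def,
      MonoidAlgebra.coeff_single, MonoidAlgebra.coeff_single, Finsupp.single_eq_of_ne' (Ne.symm hg1), Finsupp.single_eq_same]
  · intro m hm
    rw [MonoidAlgebra.coeff_add, Finsupp.add_apply, MonoidAlgebra.one_def, MonoidAlgebra.coeff_single,
      MonoidAlgebra.coeff_single] at hm
    by_cases hm1 : m = 1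
    · subst hm1; right; rw [hd1, hg]; omega
    · left
      rw [Finsupp.single_eq_of_ne' (Ne.symm hm1)] at hm
      by_contra hne
      rw [Finsupp.single_eq_of_ne' (Ne.symm hne)] at hm
      exact hm rfl

end Pd

/-! ### Coefficient coercion `ℕ[G] → ℤ[G]` -/

noncomputable def natToInt (G : Type*) [Monoid G] :
    MonoidAlgebra ℕ G →+* MonoidAlgebra ℤ G :=
  MonoidAlgebra.liftNCRingHom (Nat.castRingHom (MonoidAlgebra ℤ G)) (MonoidAlgebra.of ℤ G)
    fun x y => (Nat.cast_commute x _)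

theorem natToInt_single {G : Type*} [Monoid G] (a : G) (b : ℕ) :
    natToInt G (MonoidAlgebra.single a b) = MonoidAlgebra.single a (b : ℤ) := by
  have h1 : natToInt G (MonoidAlgebra.single a b)
      = (Nat.castRingHom (MonoidAlgebra ℤ G)) b * (MonoidAlgebra.of ℤ G) a :=
    MonoidAlgebra.liftNC_single _ _ _ _
  rw [h1]
  show ((b : ℕ) : MonoidAlgebra ℤ G) * MonoidAlgebra.single a 1 = _
  rw [MonoidAlgebra.natCast_def, MonoidAlgebra.single_mul_single, one_mul, mul_one]

theorem natToInt_apply {G : Type*} [Monoid G] (p : MonoidAlgebra ℕ G) (g : G) :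
    natToInt G p g = (p g : ℤ) := by
  induction p using MonoidAlgebra.induction_linear with
  | zero => simp
  | add f h ihf ihh =>
    rw [map_add, MonoidAlgebra.coeff_add, Finsupp.add_apply, ihf, ihh, MonoidAlgebra.coeff_add, Finsupp.add_apply]
    push_cast; ring
  | single a b =>
    rw [natToInt_single, MonoidAlgebra.coeff_single, MonoidAlgebra.coeff_single]
    rcases eq_or_ne a g with rfl | hne
    · rw [Finsupp.single_eq_same, Finsupp.single_eq_same]
    · rw [Finsupp.single_eq_of_ne' hne, Finsupp.single_eq_of_ne' hne]; rfl

theorem natToInt_injective (G : Type*) [Monoid G] : Function.Injective (natToInt G) :=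
  fun p q h => MonoidAlgebra.ext <| Finsupp.ext fun g => Nat.cast_injective
    (by rw [← natToInt_apply, ← natToInt_apply, h])

/-! ### The concrete monoid and its grading -/

section Concrete

open Monoid MonoidAlgebra

variable (X Y : Type*)

abbrev CM := Monoid.Coprod (Multiplicative (Y →₀ ℕ)) (FreeMonoid X)

def deg1 : Multiplicative (Y →₀ ℕ) →* Multiplicative ℕ where
  toFun μ := Multiplicative.ofAdd (μ.toAdd.sum fun _ n => n)
  map_one' := by
    show Multiplicative.ofAdd ((0 : Y →₀ ℕ).sum fun _ n => n) = 1
    rw [Finsupp.sum_zero_index]; rfl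
  map_mul' μ ν := by
    show Multiplicative.ofAdd ((μ.toAdd + ν.toAdd).sum fun _ n => n) = _
    rw [Finsupp.sum_add_index' (fun _ => rfl) fun _ m n => rfl, ofAdd_add]

def deg2 : FreeMonoid X →* Multiplicative ℕ where
  toFun w := Multiplicative.ofAdd w.length
  map_one' := rfl
  map_mul' a b := by
    show Multiplicative.ofAdd (a * b).length = _
    rw [FreeMonoid.length_mul, ofAdd_add]

noncomputable def degM : CM X Y →* Multiplicative ℕ := Coprod.lift (deg1 Y) (deg2 X)

noncomputable def dN (m : CM X Y) : ℕ := (degM X Y m).toAdd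

variable {X Y}

theorem dN_mul (a b : CM X Y) : dN X Y (a * b) = dN X Y a + dN X Y b := by
  unfold dN; rw [map_mul]; rfl

theorem dN_one : dN X Y (1 : CM X Y) = 0 := by
  unfold dN; rw [map_one]; rfl

theorem dN_inl (μ : Multiplicative (Y →₀ ℕ)) :
    dN X Y (Coprod.inl μ) = μ.toAdd.sum fun _ n => n := by
  unfold dN degM
  rw [Coprod.lift_apply_inl]; rfl

theorem dN_inr (w : FreeMonoid X) : dN X Y (Coprod.inr w) = w.length := by
  unfold dN degM
  rw [Coprod.lift_apply_inr]; rfl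

theorem dN_eq_zero {m : CM X Y} (h : dN X Y m = 0) : m = 1 := by
  induction m using Monoid.Coprod.induction_on with
  | inl μ =>
    rw [dN_inl] at h
    have hμ : μ.toAdd = 0 := by
      ext y
      by_cases hy : y ∈ μ.toAdd.support
      · exact (Finset.sum_eq_zero_iff.mp h) y hy
      · exact Finsupp.notMem_support_iff.mp hy
    have : μ = 1 := by
      rcases μ with μ; exact congrArg Multiplicative.ofAdd hμ
    rw [this, map_one]
  | inr w =>
    rw [dN_inr] at h
    rw [FreeMonoid.length_eq_zero.mp h, map_one]
  | mul x y ihx ihy =>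
    rw [dN_mul] at h
    rw [ihx (by omega), ihy (by omega), one_mul]

/-- The constant coefficient of a product. -/
theorem apply_one_mul (a b : MonoidAlgebra ℕ (CM X Y)) : (a * b) 1 = a 1 * b 1 := by
  have h := mul_apply_pair a b 1 1 ?_
  · simpa using h
  · intro a' _ b' _ hab
    rw [one_mul] at hab
    have h0 : dN X Y a' + dN X Y b' = 0 := by rw [← dN_mul, hab, dN_one]
    exact ⟨dN_eq_zero (by omega), dN_eq_zero (by omega)⟩

variable (X Y) in
/-- The submonoid of polynomials with constant coefficient `1`. -/
noncomputable def Gsub : Submonoid (MonoidAlgebra ℕ (CM X Y)) where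
  carrier := {a | a 1 = 1}
  one_mem' := by
    show (1 : MonoidAlgebra ℕ (CM X Y)) 1 = 1
    rw [MonoidAlgebra.one_def, MonoidAlgebra.coeff_single, Finsupp.single_eq_same]
  mul_mem' := by
    intro a b ha hb
    show (a * b) 1 = 1
    rw [apply_one_mul, ha, hb, one_mul]

theorem mem_Gsub {a : MonoidAlgebra ℕ (CM X Y)} : a ∈ Gsub X Y ↔ a 1 = 1 := Iff.rfl

/-- Generators `1 + g`. -/
noncomputable def gen (m : CM X Y) (hm : dN X Y m = 1) : ↥(Gsub X Y) :=
  ⟨1 + MonoidAlgebra.single m 1, by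
    have hm1 : m ≠ 1 := fun h => by rw [h, dN_one] at hm; omega
    rw [mem_Gsub, MonoidAlgebra.coeff_add, Finsupp.add_apply, MonoidAlgebra.one_def, MonoidAlgebra.coeff_single, Finsupp.single_eq_same,
      MonoidAlgebra.coeff_single, Finsupp.single_eq_of_ne' hm1, add_zero]⟩

theorem gen_val (m : CM X Y) (hm : dN X Y m = 1) :
    (gen m hm : MonoidAlgebra ℕ (CM X Y)) = 1 + MonoidAlgebra.single m 1 := rfl

end Concrete

/-! ### The Magnus homomorphism -/

section Magnus

open Monoid MonoidAlgebra

variable (X Y : Type*)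

/-- The image of the variable `y` under Magnus: `1 + y`, inside the commutative
monoid algebra on the first factor. -/
noncomputable def XYvar (y : Y) : MonoidAlgebra ℕ (Multiplicative (Y →₀ ℕ)) :=
  1 + MonoidAlgebra.single (Multiplicative.ofAdd (Finsupp.single y 1)) 1

variable {X} in
/-- Magnus on the free commutative monoid, valued in the commutative algebra. -/
noncomputable def psi : Multiplicative (Y →₀ ℕ) →* MonoidAlgebra ℕ (Multiplicative (Y →₀ ℕ)) where
  toFun μ := μ.toAdd.prod fun y n => (XYvar Y y) ^ n
  map_one' := by
    show Finsupp.prod 0 _ = 1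
    rw [Finsupp.prod_zero_index]
  map_mul' μ ν := by
    show Finsupp.prod (μ.toAdd + ν.toAdd) _ = _
    rw [Finsupp.prod_add_index' (fun y => pow_zero _) fun y m n => pow_add _ m n]

noncomputable def iota1 : MonoidAlgebra ℕ (Multiplicative (Y →₀ ℕ)) →+*
    MonoidAlgebra ℕ (CM X Y) :=
  MonoidAlgebra.mapDomainRingHom ℕ (Coprod.inl : Multiplicative (Y →₀ ℕ) →* CM X Y)

theorem iota1_single (a : Multiplicative (Y →₀ ℕ)) (b : ℕ) :
    iota1 X Y (MonoidAlgebra.single a b) = MonoidAlgebra.single (Coprod.inl a) b :=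
  MonoidAlgebra.mapDomain_single

/-- Constant coefficient, as a monoid hom. -/
noncomputable def E : MonoidAlgebra ℕ (CM X Y) →* ℕ where
  toFun f := f 1
  map_one' := by
    show (1 : MonoidAlgebra ℕ (CM X Y)) 1 = 1
    rw [MonoidAlgebra.one_def, MonoidAlgebra.coeff_single, Finsupp.single_eq_same]
  map_mul' := apply_one_mul

theorem inl_single_ne_one (y : Y) :
    (Coprod.inl (Multiplicative.ofAdd (Finsupp.single y 1)) : CM X Y) ≠ 1 := by
  intro h
  have := dN_inl (X := X) (Multiplicative.ofAdd (Finsupp.single y 1))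
  rw [h, dN_one] at this
  have h2 : (Finsupp.single y 1 : Y →₀ ℕ).sum (fun _ n => n) = 1 :=
    Finsupp.sum_single_index rfl
  rw [show (Multiplicative.ofAdd (Finsupp.single y 1)).toAdd = Finsupp.single y 1 from rfl,
    h2] at this
  omega

theorem E_iota1_XYvar (y : Y) : E X Y (iota1 X Y (XYvar Y y)) = 1 := by
  have hval : iota1 X Y (XYvar Y y) = (1 : MonoidAlgebra ℕ (CM X Y))
      + MonoidAlgebra.single (Coprod.inl (Multiplicative.ofAdd (Finsupp.single y 1))) 1 := by
    unfold XYvar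
    rw [map_add, map_one, iota1_single]
  show (iota1 X Y (XYvar Y y)) 1 = 1
  rw [hval, MonoidAlgebra.coeff_add, Finsupp.add_apply, MonoidAlgebra.one_def, MonoidAlgebra.coeff_single, Finsupp.single_eq_same,
    MonoidAlgebra.coeff_single, Finsupp.single_eq_of_ne' (inl_single_ne_one X Y y), add_zero]

noncomputable def phi1 : Multiplicative (Y →₀ ℕ) →* ↥(Gsub X Y) :=
  MonoidHom.codRestrict ((iota1 X Y).toMonoidHom.comp (psi Y)) (Gsub X Y) fun μ => by
    rw [mem_Gsub]
    show ((E X Y).comp (iota1 X Y).toMonoidHom)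
      (μ.toAdd.prod fun y n => (XYvar Y y) ^ n) = 1
    rw [map_finsuppProd]
    apply Finset.prod_eq_one
    intro y _
    show ((E X Y).comp (iota1 X Y).toMonoidHom) (XYvar Y y ^ (μ.toAdd y)) = 1
    rw [map_pow]
    show (E X Y (iota1 X Y (XYvar Y y))) ^ _ = 1
    rw [E_iota1_XYvar, one_pow]

noncomputable def phi2 : FreeMonoid X →* ↥(Gsub X Y) :=
  FreeMonoid.lift fun x => gen (Coprod.inr (FreeMonoid.of x))
    (by rw [dN_inr, FreeMonoid.length_of])

noncomputable def phi : CM X Y →* ↥(Gsub X Y) := Coprod.lift (phi1 X Y) (phi2 X Y)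

variable {X Y}

theorem phi_inl_single (y : Y) :
    ((phi X Y (Coprod.inl (Multiplicative.ofAdd (Finsupp.single y 1))) :
      ↥(Gsub X Y)) : MonoidAlgebra ℕ (CM X Y))
    = 1 + MonoidAlgebra.single (Coprod.inl (Multiplicative.ofAdd (Finsupp.single y 1))) 1 := by
  unfold phi
  rw [Coprod.lift_apply_inl]
  show iota1 X Y (psi Y (Multiplicative.ofAdd (Finsupp.single y 1))) = _
  have h1 : psi Y (Multiplicative.ofAdd (Finsupp.single y 1)) = XYvar Y y := by
    show Finsupp.prod (Finsupp.single y 1) (fun y n => (XYvar Y y) ^ n) = XYvar Y y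
    rw [Finsupp.prod_single_index (h := fun y n => (XYvar Y y) ^ n) (pow_zero _), pow_one]
  rw [h1]
  unfold XYvar
  rw [map_add, map_one, iota1_single]

theorem phi_inr_of (x : X) :
    ((phi X Y (Coprod.inr (FreeMonoid.of x)) : ↥(Gsub X Y)) : MonoidAlgebra ℕ (CM X Y))
    = 1 + MonoidAlgebra.single (Coprod.inr (FreeMonoid.of x)) 1 := by
  unfold phi
  rw [Coprod.lift_apply_inr]
  show ((phi2 X Y (FreeMonoid.of x) : ↥(Gsub X Y)) : MonoidAlgebra ℕ (CM X Y)) = _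
  unfold phi2
  rw [FreeMonoid.lift_eval_of]
  rfl

theorem phiP (m : CM X Y) :
    Pd (dN X Y) ((phi X Y m : ↥(Gsub X Y)) : MonoidAlgebra ℕ (CM X Y)) m := by
  have hPmul : ∀ a b : CM X Y,
      Pd (dN X Y) ((phi X Y a : ↥(Gsub X Y)) : MonoidAlgebra ℕ (CM X Y)) a →
      Pd (dN X Y) ((phi X Y b : ↥(Gsub X Y)) : MonoidAlgebra ℕ (CM X Y)) b →
      Pd (dN X Y) ((phi X Y (a * b) : ↥(Gsub X Y)) : MonoidAlgebra ℕ (CM X Y)) (a * b) := by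
    intro a b ha hb
    rw [map_mul, Submonoid.coe_mul]
    exact Pd.mul _ dN_mul ha hb
  have hone : Pd (dN X Y) ((phi X Y (1 : CM X Y) : ↥(Gsub X Y)) : MonoidAlgebra ℕ (CM X Y)) 1 := by
    rw [map_one, OneMemClass.coe_one]
    exact Pd.one _
  induction m using Monoid.Coprod.induction_on with
  | inl μ =>
    have main : ∀ ν : Y →₀ ℕ,
        Pd (dN X Y) ((phi X Y (Coprod.inl (Multiplicative.ofAdd ν)) :
          ↥(Gsub X Y)) : MonoidAlgebra ℕ (CM X Y)) (Coprod.inl (Multiplicative.ofAdd ν)) := by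
      intro ν
      induction ν using Finsupp.induction with
      | zero =>
        have h : Coprod.inl (N := FreeMonoid X) (Multiplicative.ofAdd (0 : Y →₀ ℕ)) = 1 :=
          map_one _
        rw [h]; exact hone
      | single_add y n f hf hn ih =>
        have hsingle : ∀ k : ℕ,
            Pd (dN X Y) ((phi X Y (Coprod.inl (Multiplicative.ofAdd (Finsupp.single y k))) :
              ↥(Gsub X Y)) : MonoidAlgebra ℕ (CM X Y))
              (Coprod.inl (Multiplicative.ofAdd (Finsupp.single y k))) := by
          intro k
          induction k with
          | zero =>
            have h : Coprod.inl (N := FreeMonoid X)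
                (Multiplicative.ofAdd (Finsupp.single y (0 : ℕ))) = 1 := by
              rw [Finsupp.single_zero]; exact map_one _
            rw [h]; exact hone
          | succ k ihk =>
            have h : (Finsupp.single y (k + 1) : Y →₀ ℕ)
                = Finsupp.single y k + Finsupp.single y 1 := by rw [← Finsupp.single_add]
            have h2 : Coprod.inl (N := FreeMonoid X)
                  (Multiplicative.ofAdd (Finsupp.single y (k + 1)))
                = Coprod.inl (Multiplicative.ofAdd (Finsupp.single y k))
                  * Coprod.inl (Multiplicative.ofAdd (Finsupp.single y 1)) := by
              rw [h, ofAdd_add, map_mul]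
            rw [h2]
            apply hPmul _ _ ihk
            have hbase : Pd (dN X Y)
                ((phi X Y (Coprod.inl (Multiplicative.ofAdd (Finsupp.single y 1))) :
                  ↥(Gsub X Y)) : MonoidAlgebra ℕ (CM X Y))
                (Coprod.inl (Multiplicative.ofAdd (Finsupp.single y 1))) := by
              rw [phi_inl_single]
              apply Pd.gen _ dN_one
              rw [dN_inl]
              exact Finsupp.sum_single_index rfl
            exact hbase
        have h2 : Coprod.inl (N := FreeMonoid X) (Multiplicative.ofAdd (Finsupp.single y n + f))
            = Coprod.inl (Multiplicative.ofAdd (Finsupp.single y n))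
              * Coprod.inl (Multiplicative.ofAdd f) := by
          rw [ofAdd_add, map_mul]
        rw [h2]
        exact hPmul _ _ (hsingle n) ih
    exact main μ.toAdd
  | inr w =>
    induction w using FreeMonoid.inductionOn' with
    | one =>
      have h : Coprod.inr (M := Multiplicative (Y →₀ ℕ)) (1 : FreeMonoid X) = 1 := map_one _
      rw [h]; exact hone
    | of_mul x xs ih =>
      have h : Coprod.inr (M := Multiplicative (Y →₀ ℕ)) (FreeMonoid.of x * xs)
          = Coprod.inr (FreeMonoid.of x) * Coprod.inr xs := map_mul _ _ _
      rw [h]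
      apply hPmul _ _ ?_ ih
      rw [phi_inr_of]
      apply Pd.gen _ dN_one
      rw [dN_inr, FreeMonoid.length_of]
  | mul x y ihx ihy => exact hPmul x y ihx ihy

theorem phi_inj : Function.Injective (phi X Y) := by
  have key : ∀ m m' : CM X Y, phi X Y m = phi X Y m' → dN X Y m' ≤ dN X Y m → m = m' := by
    intro m m' h hle
    have h1 : ((phi X Y m : ↥(Gsub X Y)) : MonoidAlgebra ℕ (CM X Y)) m = 1 := (phiP m).1
    have h2 := (phiP m').2 m
    rw [← h] at h2
    rcases h2 (by rw [h1]; exact one_ne_zero) with h3 | h3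
    · exact h3
    · omega
  intro m m' h
  rcases le_total (dN X Y m') (dN X Y m) with hle | hle
  · exact key m m' h hle
  · exact (key m' m h.symm hle).symm

end Magnus

/-! ### The orders -/

section Order

open Monoid MonoidAlgebra

variable (X Y : Type*)

noncomputable def ordM0 : LinearOrder (CM X Y) := IsWellOrder.linearOrder WellOrderingRel

noncomputable def ordM : LinearOrder (CM X Y) :=
  letI := ordM0 X Y
  LinearOrder.lift' (fun m => toLex (dN X Y m, m))
    (fun a b h => congrArg (fun p => (ofLex p).2) h)

attribute [local instance] ordM

variable {X Y}

theorem lt_of_dN_lt {a b : CM X Y} (h : dN X Y a < dN X Y b) : a < b := by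
  letI := ordM0 X Y
  exact Prod.Lex.lt_iff.2 (Or.inl h)

theorem dN_le_of_lt {a b : CM X Y} (h : a < b) : dN X Y a ≤ dN X Y b := by
  letI := ordM0 X Y
  have h' : toLex (dN X Y a, a) < toLex (dN X Y b, b) := h
  rcases Prod.Lex.lt_iff.1 h' with h2 | h2
  · exact h2.le
  · exact le_of_eq h2.1

variable (X Y) in
noncomputable def ordT : LinearOrder ↥(Gsub X Y) :=
  LinearOrder.lift' (fun a : ↥(Gsub X Y) => @toLex (CM X Y →₀ ℕ) a.val.coeff)
    (fun a b h => Subtype.ext (MonoidAlgebra.ext (congrArg (@ofLex (CM X Y →₀ ℕ)) h)))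

attribute [local instance] ordT

theorem T_lt_iff {a b : ↥(Gsub X Y)} :
    a < b ↔ Finsupp.Lex (· < ·) (· < ·) a.val.coeff b.val.coeff := by
  constructor <;> (intro h; exact h)

/-- Multiplication by terms of positive degree does not affect coefficients in
degrees up to `dN m₀`, given that `a` and `b` agree below `m₀`. -/
theorem conv_low_left {a b c' : MonoidAlgebra ℕ (CM X Y)}
    (hc' : ∀ u ∈ c'.coeff.support, u ≠ 1) {m₀ : CM X Y}
    (hab : ∀ v : CM X Y, v < m₀ → a v = b v) {m : CM X Y} (hm : dN X Y m ≤ dN X Y m₀) :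
    (c' * a) m = (c' * b) m := by
  classical
  have hmain : (natToInt _ c' * (natToInt _ a - natToInt _ b)) m = 0 := by
    by_contra h0
    have hm' : m ∈ (natToInt _ c' * (natToInt _ a - natToInt _ b)).coeff.support :=
      Finsupp.mem_support_iff.mpr h0
    obtain ⟨u, hu, v, hv, rfl⟩ := Finset.mem_mul.mp (MonoidAlgebra.support_coeff_mul_subset _ _ hm')
    have hu1 : u ≠ 1 := by
      apply hc' u
      rw [Finsupp.mem_support_iff] at hu ⊢
      rw [natToInt_apply] at hu
      exact_mod_cast hu
    have hdu : 1 ≤ dN X Y u := by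
      rcases Nat.eq_zero_or_pos (dN X Y u) with h1 | h1
      · exact absurd (dN_eq_zero h1) hu1
      · exact h1
    have hv1 : ¬ v < m₀ := by
      intro hvm
      rw [Finsupp.mem_support_iff, MonoidAlgebra.coeff_sub, Finsupp.sub_apply, natToInt_apply, natToInt_apply] at hv
      rw [hab v hvm] at hv
      simp at hv
    have hdv : dN X Y m₀ ≤ dN X Y v := by
      by_contra hlt
      exact hv1 (lt_of_dN_lt (by omega))
    rw [dN_mul] at hm
    omega
  rw [mul_sub, MonoidAlgebra.coeff_sub, Finsupp.sub_apply] at hmain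
  have h2 : (natToInt _ (c' * a)) m = (natToInt _ (c' * b)) m := by
    rw [map_mul, map_mul]
    exact sub_eq_zero.mp hmain
  rw [natToInt_apply, natToInt_apply] at h2
  exact_mod_cast h2

theorem conv_low_right {a b c' : MonoidAlgebra ℕ (CM X Y)}
    (hc' : ∀ u ∈ c'.coeff.support, u ≠ 1) {m₀ : CM X Y}
    (hab : ∀ v : CM X Y, v < m₀ → a v = b v) {m : CM X Y} (hm : dN X Y m ≤ dN X Y m₀) :
    (a * c') m = (b * c') m := by
  classical
  have hmain : ((natToInt _ a - natToInt _ b) * natToInt _ c') m = 0 := by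
    by_contra h0
    have hm' : m ∈ ((natToInt _ a - natToInt _ b) * natToInt _ c').coeff.support :=
      Finsupp.mem_support_iff.mpr h0
    obtain ⟨v, hv, u, hu, rfl⟩ := Finset.mem_mul.mp (MonoidAlgebra.support_coeff_mul_subset _ _ hm')
    have hu1 : u ≠ 1 := by
      apply hc' u
      rw [Finsupp.mem_support_iff] at hu ⊢
      rw [natToInt_apply] at hu
      exact_mod_cast hu
    have hdu : 1 ≤ dN X Y u := by
      rcases Nat.eq_zero_or_pos (dN X Y u) with h1 | h1
      · exact absurd (dN_eq_zero h1) hu1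
      · exact h1
    have hv1 : ¬ v < m₀ := by
      intro hvm
      rw [Finsupp.mem_support_iff, MonoidAlgebra.coeff_sub, Finsupp.sub_apply, natToInt_apply, natToInt_apply] at hv
      rw [hab v hvm] at hv
      simp at hv
    have hdv : dN X Y m₀ ≤ dN X Y v := by
      by_contra hlt
      exact hv1 (lt_of_dN_lt (by omega))
    rw [dN_mul] at hm
    omega
  rw [sub_mul, MonoidAlgebra.coeff_sub, Finsupp.sub_apply] at hmain
  have h2 : (natToInt _ (a * c')) m = (natToInt _ (b * c')) m := by
    rw [map_mul, map_mul]
    exact sub_eq_zero.mp hmain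
  rw [natToInt_apply, natToInt_apply] at h2
  exact_mod_cast h2

theorem Gsub_decomp (c : ↥(Gsub X Y)) :
    ∃ c' : MonoidAlgebra ℕ (CM X Y), c.val = 1 + c' ∧ ∀ u ∈ c'.coeff.support, u ≠ 1 := by
  refine ⟨MonoidAlgebra.erase 1 c.val, ?_, ?_⟩
  · have h0 : MonoidAlgebra.single (1 : CM X Y) (1 : ℕ) = (1 : MonoidAlgebra ℕ (CM X Y)) :=
      (MonoidAlgebra.one_def).symm
    conv_lhs => rw [← MonoidAlgebra.single_add_erase 1 c.val]
    rw [mem_Gsub.1 c.2, h0]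
  · intro u hu
    rw [MonoidAlgebra.coeff_erase, Finsupp.support_erase] at hu
    exact Finset.ne_of_mem_erase hu

theorem T_covL (c a b : ↥(Gsub X Y)) (h : a < b) : c * a < c * b := by
  obtain ⟨m₀, hlow, hm₀⟩ := T_lt_iff.1 h
  obtain ⟨c', hdecomp, hc'supp⟩ := Gsub_decomp c
  have happ : ∀ (x : ↥(Gsub X Y)) (m : CM X Y),
      ((c * x).val) m = x.val m + (c' * x.val) m := by
    intro x m
    have h1 : (c * x).val = c.val * x.val := rfl
    rw [h1]
    conv_lhs => rw [hdecomp]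
    rw [add_mul, one_mul, MonoidAlgebra.coeff_add, Finsupp.add_apply]
  apply T_lt_iff.2
  refine ⟨m₀, ?_, ?_⟩
  · intro d hd
    rw [happ, happ, hlow d hd, conv_low_left hc'supp hlow (dN_le_of_lt hd)]
  · rw [happ, happ, conv_low_left hc'supp hlow (le_refl _)]
    exact Nat.add_lt_add_right hm₀ _

theorem T_covR (c a b : ↥(Gsub X Y)) (h : a < b) : a * c < b * c := by
  obtain ⟨m₀, hlow, hm₀⟩ := T_lt_iff.1 h
  obtain ⟨c', hdecomp, hc'supp⟩ := Gsub_decomp c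
  have happ : ∀ (x : ↥(Gsub X Y)) (m : CM X Y),
      ((x * c).val) m = x.val m + (x.val * c') m := by
    intro x m
    have h1 : (x * c).val = x.val * c.val := rfl
    rw [h1]
    conv_lhs => rw [hdecomp]
    rw [mul_add, mul_one, MonoidAlgebra.coeff_add, Finsupp.add_apply]
  apply T_lt_iff.2
  refine ⟨m₀, ?_, ?_⟩
  · intro d hd
    rw [happ, happ, hlow d hd, conv_low_right hc'supp hlow (dN_le_of_lt hd)]
  · rw [happ, happ, conv_low_right hc'supp hlow (le_refl _)]
    exact Nat.add_lt_add_right hm₀ _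

end Order

end Stmt9

/-- Let `M = [Y] ∗ ⟨X⟩` be the coproduct of the free commutative monoid on
`Y` and the free monoid on `X`. In the monoid semiring `ℕ[M]`, multiplication by nonzero
elements is cancellative on both sides, and roots are unique: `f ^ n = g ^ n` for some
`n ≥ 1` implies `f = g`. -/
theorem stmt9 (X Y : Type*) :
    (∀ f g h : MonoidAlgebra ℕ (Monoid.Coprod (Multiplicative (Y →₀ ℕ)) (FreeMonoid X)),
      h ≠ 0 → (f * h = g * h → f = g) ∧ (h * f = h * g → f = g)) ∧
    (∀ f g : MonoidAlgebra ℕ (Monoid.Coprod (Multiplicative (Y →₀ ℕ)) (FreeMonoid X)),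
      ∀ n : ℕ, 1 ≤ n → f ^ n = g ^ n → f = g) := by
  classical
  letI : LinearOrder ↥(Stmt9.Gsub X Y) := Stmt9.ordT X Y
  haveI hcov1 : CovariantClass ↥(Stmt9.Gsub X Y) ↥(Stmt9.Gsub X Y) (· * ·) (· < ·) :=
    ⟨fun c a b h => Stmt9.T_covL c a b h⟩
  haveI hcov2 : CovariantClass ↥(Stmt9.Gsub X Y) ↥(Stmt9.Gsub X Y)
      (Function.swap (· * ·)) (· < ·) :=
    ⟨fun c a b h => Stmt9.T_covR c a b h⟩
  set Φ := MonoidAlgebra.mapDomainRingHom ℕ (Stmt9.phi X Y) with hΦ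
  have hΦinj : Function.Injective Φ := fun p q h =>
    MonoidAlgebra.mapDomain_injective Stmt9.phi_inj h
  set Ψ := (Stmt9.natToInt ↥(Stmt9.Gsub X Y)).comp Φ with hΨ
  have hΨinj : Function.Injective Ψ := fun p q h =>
    hΦinj (Stmt9.natToInt_injective _ h)
  have hΨpos : ∀ p t, 0 ≤ (Ψ p) t := fun p t => by
    show 0 ≤ (Stmt9.natToInt _ (Φ p)) t
    rw [Stmt9.natToInt_apply]
    exact Int.natCast_nonneg _
  have hΨne : ∀ {p}, p ≠ 0 → Ψ p ≠ 0 := fun {p} hp h0 =>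
    hp (hΨinj (show Ψ p = Ψ 0 by rw [h0, map_zero]))
  constructor
  · intro f g h hh
    constructor
    · intro he
      apply hΨinj
      exact Stmt9.my_mul_right_cancel (hΨne hh) (by rw [← map_mul, ← map_mul, he])
    · intro he
      apply hΨinj
      exact Stmt9.my_mul_left_cancel (hΨne hh) (by rw [← map_mul, ← map_mul, he])
  · intro f g n hn he
    apply hΨinj
    exact Stmt9.pow_eq_pow (hΨpos f) (hΨpos g) hn (by rw [← map_pow, ← map_pow, he])
end

section
/- Let X and Y be (possibly empty) sets and let M = [Y] ∗ ⟨X⟩ be the monoid coproduct of the free commutative monoid on Y and the free monoid on X. Then the monoid algebra ℤ[M] (MonoidAlgebra ℤ M) is a domain: it is a nonzero ring in which ab = 0 implies a = 0 or b = 0. -/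
namespace Stmt10Aux

open Monoid

variable {X Y : Type*}

abbrev CC (Y : Type*) := Multiplicative (Y →₀ ℕ)
abbrev MM (X Y : Type*) := Monoid.Coprod (CC Y) (FreeMonoid X)
abbrev SS (X Y : Type*) := List (CC Y ⊕ X)

lemma cc_mul_eq_one {a b : CC Y} (h : a * b = 1) : a = 1 ∧ b = 1 := by
  have h' : a.toAdd + b.toAdd = (0 : Y →₀ ℕ) := h
  have ha : a.toAdd = 0 := by
    ext y
    have := DFunLike.congr_fun h' y
    simp only [Finsupp.add_apply, Finsupp.coe_zero, Pi.zero_apply] at this ⊢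
    omega
  have hb : b.toAdd = 0 := by
    ext y
    have := DFunLike.congr_fun h' y
    simp only [Finsupp.add_apply, Finsupp.coe_zero, Pi.zero_apply] at this ⊢
    omega
  exact ⟨Multiplicative.toAdd.injective ha, Multiplicative.toAdd.injective hb⟩

open Classical in
noncomputable def pC (c : CC Y) (l : SS X Y) : SS X Y :=
  if c = 1 then l
  else
    match l with
    | .inl c' :: t => .inl (c * c') :: t
    | l => .inl c :: l

lemma pC_one (l : SS X Y) : pC (1 : CC Y) l = l := by
  unfold pC; rw [if_pos rfl]

variable {c : CC Y}

lemma pC_nil (hc : c ≠ 1) : pC c ([] : SS X Y) = [.inl c] := by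
  unfold pC; rw [if_neg hc]

lemma pC_inl (hc : c ≠ 1) (c' : CC Y) (t : SS X Y) :
    pC c (.inl c' :: t) = .inl (c * c') :: t := by
  unfold pC; rw [if_neg hc]

lemma pC_inr (hc : c ≠ 1) (x : X) (t : SS X Y) :
    pC c (.inr x :: t) = .inl c :: .inr x :: t := by
  unfold pC; rw [if_neg hc]

lemma pC_pC (a b : CC Y) (l : SS X Y) : pC (a * b) l = pC a (pC b l) := by
  by_cases hb : b = 1
  · subst hb; rw [pC_one, mul_one]
  by_cases ha : a = 1
  · subst ha; rw [pC_one, one_mul]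
  have hab : a * b ≠ 1 := fun h => ha (cc_mul_eq_one h).1
  rcases l with _ | ⟨(c' | x), t⟩
  · rw [pC_nil hb, pC_nil hab, pC_inl ha]
  · rw [pC_inl hb, pC_inl hab, pC_inl ha, mul_assoc]
  · rw [pC_inr hb, pC_inr hab, pC_inl ha]

noncomputable def pCHom : CC Y →* Function.End (SS X Y) where
  toFun c := pC c
  map_one' := funext fun l => pC_one l
  map_mul' a b := funext fun l => pC_pC a b l

noncomputable def pXHom : FreeMonoid X →* Function.End (SS X Y) :=
  FreeMonoid.lift fun x => ((fun l => .inr x :: l) : Function.End (SS X Y))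

noncomputable def Phi : MM X Y →* Function.End (SS X Y) :=
  Monoid.Coprod.lift pCHom pXHom

noncomputable def nf (a : MM X Y) : SS X Y := Phi a []

noncomputable def gen : CC Y ⊕ X → MM X Y :=
  Sum.elim (fun c => Monoid.Coprod.inl c) (fun x => Monoid.Coprod.inr (FreeMonoid.of x))

noncomputable def emb (l : SS X Y) : MM X Y := (l.map gen).prod

lemma emb_nil : emb ([] : SS X Y) = 1 := rfl

lemma emb_cons (h : CC Y ⊕ X) (t : SS X Y) : emb (h :: t) = gen h * emb t := by
  simp [emb]

lemma Phi_mul (a b : MM X Y) (l : SS X Y) : Phi (a * b) l = Phi a (Phi b l) := by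
  rw [map_mul]; rfl

lemma Phi_one (l : SS X Y) : Phi (1 : MM X Y) l = l := by
  rw [map_one]; rfl

lemma Phi_inl (c : CC Y) (l : SS X Y) : Phi (Monoid.Coprod.inl c) l = pC c l := by
  show (Monoid.Coprod.lift pCHom pXHom) (Monoid.Coprod.inl c) l = pC c l
  rw [Monoid.Coprod.lift_apply_inl]; rfl

lemma Phi_inr (n : FreeMonoid X) (l : SS X Y) :
    Phi (Monoid.Coprod.inr n) l = pXHom n l := by
  show (Monoid.Coprod.lift pCHom pXHom) (Monoid.Coprod.inr n) l = pXHom n l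
  rw [Monoid.Coprod.lift_apply_inr]

lemma pX_of (x : X) (l : SS X Y) : pXHom (FreeMonoid.of x) l = .inr x :: l := by
  have h : (pXHom (FreeMonoid.of x) : Function.End (SS X Y)) =
      ((fun l => .inr x :: l) : Function.End (SS X Y)) := by
    unfold pXHom
    exact FreeMonoid.lift_eval_of _ x
  exact congrFun h l

lemma emb_pC (c : CC Y) (s : SS X Y) : emb (pC c s) = Monoid.Coprod.inl c * emb s := by
  by_cases hc : c = 1
  · subst hc; rw [pC_one, map_one, one_mul]
  rcases s with _ | ⟨(c' | x), t⟩
  · rw [pC_nil hc, emb_cons, emb_nil]; rfl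
  · rw [pC_inl hc, emb_cons, emb_cons]
    show Monoid.Coprod.inl (c * c') * emb t = _
    rw [map_mul, mul_assoc]; rfl
  · rw [pC_inr hc, emb_cons, emb_cons]; rfl

lemma emb_pX (n : FreeMonoid X) (s : SS X Y) :
    emb (pXHom n s) = Monoid.Coprod.inr n * emb s := by
  induction n using FreeMonoid.inductionOn' generalizing s with
  | one => rw [map_one, map_one, one_mul]; rfl
  | of_mul x xs ih =>
    have : pXHom (FreeMonoid.of x * xs) s = .inr x :: pXHom xs s := by
      rw [map_mul]
      show pXHom (FreeMonoid.of x) (pXHom xs s) = _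
      rw [pX_of]
    rw [this, emb_cons, ih, map_mul]
    show Monoid.Coprod.inr (FreeMonoid.of x) * _ = _
    rw [mul_assoc]

lemma emb_Phi (a : MM X Y) (l : SS X Y) : emb (Phi a l) = a * emb l := by
  induction a using Monoid.Coprod.induction_on' generalizing l with
  | one => rw [Phi_one, one_mul]
  | inl_mul c a ih => rw [Phi_mul, Phi_inl, emb_pC, ih, mul_assoc]
  | inr_mul n a ih => rw [Phi_mul, Phi_inr, emb_pX, ih, mul_assoc]

lemma emb_nf (a : MM X Y) : emb (nf a) = a := by
  rw [nf, emb_Phi, emb_nil, mul_one]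

noncomputable def cL (l : SS X Y) : CC Y := Monoid.Coprod.fst (emb l)
noncomputable def xL (l : SS X Y) : FreeMonoid X := Monoid.Coprod.snd (emb l)

lemma cL_nil : cL ([] : SS X Y) = 1 := by rw [cL, emb_nil, map_one]
lemma xL_nil : xL ([] : SS X Y) = 1 := by rw [xL, emb_nil, map_one]

lemma cL_inl (c : CC Y) (t : SS X Y) : cL (.inl c :: t) = c * cL t := by
  rw [cL, cL, emb_cons, map_mul]
  show Monoid.Coprod.fst (Monoid.Coprod.inl c) * _ = _
  rw [Monoid.Coprod.fst_apply_inl]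

lemma cL_inr (x : X) (t : SS X Y) : cL (.inr x :: t) = cL t := by
  rw [cL, cL, emb_cons, map_mul]
  show Monoid.Coprod.fst (Monoid.Coprod.inr (FreeMonoid.of x)) * _ = _
  rw [Monoid.Coprod.fst_apply_inr, one_mul]

lemma xL_inl (c : CC Y) (t : SS X Y) : xL (.inl c :: t) = xL t := by
  rw [xL, xL, emb_cons, map_mul]
  show Monoid.Coprod.snd (Monoid.Coprod.inl c) * _ = _
  rw [Monoid.Coprod.snd_apply_inl, one_mul]

lemma xL_inr (x : X) (t : SS X Y) : xL (.inr x :: t) = FreeMonoid.of x * xL t := by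
  rw [xL, xL, emb_cons, map_mul]
  show Monoid.Coprod.snd (Monoid.Coprod.inr (FreeMonoid.of x)) * _ = _
  rw [Monoid.Coprod.snd_apply_inr]

lemma cL_nf (a : MM X Y) : cL (nf a) = Monoid.Coprod.fst a := by rw [cL, emb_nf]
lemma xL_nf (a : MM X Y) : xL (nf a) = Monoid.Coprod.snd a := by rw [xL, emb_nf]

/-- Normal form predicate: no `inl 1` entries, no two adjacent `inl`s. -/
def Nice (l : SS X Y) : Prop :=
  (∀ c : CC Y, Sum.inl c ∈ l → c ≠ 1) ∧
    l.Chain' fun a b => a.isLeft → b.isLeft → False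

lemma nice_nil : Nice ([] : SS X Y) := ⟨by simp, List.isChain_nil⟩

lemma nice_tail {h : CC Y ⊕ X} {t : SS X Y} (ht : Nice (h :: t)) : Nice t :=
  ⟨fun c hc => ht.1 c (List.mem_cons_of_mem _ hc), ht.2.tail⟩

lemma nice_cons_inr (x : X) {l : SS X Y} (hl : Nice l) : Nice (.inr x :: l) := by
  refine ⟨fun c hc => ?_, ?_⟩
  · rcases List.mem_cons.mp hc with h | h
    · exact absurd h (by simp)
    · exact hl.1 c h
  · refine List.isChain_cons.mpr ⟨fun y _ h' => ?_, hl.2⟩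
    simp at h'

lemma nice_pC (c : CC Y) {l : SS X Y} (hl : Nice l) : Nice (pC c l) := by
  by_cases hc : c = 1
  · subst hc; rwa [pC_one]
  rcases l with _ | ⟨(c' | x), t⟩
  · rw [pC_nil hc]
    refine ⟨fun c₀ h₀ => ?_, List.isChain_singleton _⟩
    simp only [List.mem_singleton, Sum.inl.injEq] at h₀
    subst h₀; exact hc
  · rw [pC_inl hc]
    refine ⟨fun c₀ h₀ => ?_, ?_⟩
    · rcases List.mem_cons.mp h₀ with h | h
      · simp only [Sum.inl.injEq] at h
        subst h
        intro h1
        exact hc (cc_mul_eq_one h1).1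
      · exact hl.1 c₀ (List.mem_cons_of_mem _ h)
    · have h2 := hl.2
      rcases List.isChain_cons.mp h2 with ⟨hrel, hch⟩
      exact List.isChain_cons.mpr ⟨fun y hy _ h' => hrel y hy rfl h', hch⟩
  · rw [pC_inr hc]
    refine ⟨fun c₀ h₀ => ?_, ?_⟩
    · rcases List.mem_cons.mp h₀ with h | h
      · simp only [Sum.inl.injEq] at h
        subst h; exact hc
      · exact hl.1 c₀ h
    · refine List.isChain_cons_cons.mpr ⟨fun _ h' => by simp at h', hl.2⟩

lemma nice_pX (n : FreeMonoid X) {l : SS X Y} (hl : Nice l) : Nice (pXHom n l) := by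
  induction n using FreeMonoid.inductionOn' generalizing l with
  | one => rw [map_one]; exact hl
  | of_mul x xs ih =>
    have : pXHom (FreeMonoid.of x * xs) l = .inr x :: pXHom xs l := by
      rw [map_mul]
      show pXHom (FreeMonoid.of x) (pXHom xs l) = _
      rw [pX_of]
    rw [this]
    exact nice_cons_inr x (ih hl)

lemma nice_Phi (a : MM X Y) {l : SS X Y} (hl : Nice l) : Nice (Phi a l) := by
  induction a using Monoid.Coprod.induction_on' generalizing l with
  | one => rwa [Phi_one]
  | inl_mul c a ih => rw [Phi_mul, Phi_inl]; exact nice_pC c (ih hl)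
  | inr_mul n a ih => rw [Phi_mul, Phi_inr]; exact nice_pX n (ih hl)

lemma nice_nf (a : MM X Y) : Nice (nf a) := nice_Phi a nice_nil

noncomputable def glue (u v : SS X Y) : SS X Y :=
  u.foldr (fun h acc => Sum.elim (fun c => pC c acc) (fun x => .inr x :: acc) h) v

lemma glue_nil (v : SS X Y) : glue [] v = v := rfl

lemma glue_inl (c : CC Y) (u v : SS X Y) : glue (.inl c :: u) v = pC c (glue u v) := rfl

lemma glue_inr (x : X) (u v : SS X Y) : glue (.inr x :: u) v = .inr x :: glue u v := rfl

lemma Phi_emb (u : SS X Y) (l : SS X Y) : Phi (emb u) l = glue u l := by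
  induction u generalizing l with
  | nil => rw [emb_nil, Phi_one, glue_nil]
  | cons h t ih =>
    rcases h with c | x
    · rw [emb_cons, Phi_mul, glue_inl, ← ih]
      show Phi (Monoid.Coprod.inl c) _ = _
      rw [Phi_inl]
    · rw [emb_cons, Phi_mul, glue_inr, ← ih]
      show Phi (Monoid.Coprod.inr (FreeMonoid.of x)) _ = _
      rw [Phi_inr, pX_of]

lemma Phi_glue (a : MM X Y) (l : SS X Y) : Phi a l = glue (nf a) l := by
  conv_lhs => rw [← emb_nf a]
  rw [Phi_emb]

lemma nice_ne_nil {u : SS X Y} (hu : Nice u) (h : u ≠ []) : cL u ≠ 1 ∨ xL u ≠ 1 := by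
  rcases u with _ | ⟨(c | x), t⟩
  · exact absurd rfl h
  · left
    rw [cL_inl]
    intro h1
    exact hu.1 c (by simp) (cc_mul_eq_one h1).1
  · right
    rw [xL_inr]
    intro h1
    simpa using congrArg FreeMonoid.toList h1

lemma pC_inj (hc : c ≠ 1) {v v' : SS X Y} (hv : Nice v) (hv' : Nice v')
    (h : pC c v = pC c v') : v = v' := by
  rcases v with _ | ⟨(c₀ | x), t⟩ <;> rcases v' with _ | ⟨(c₀' | x'), t'⟩
  · rfl
  · rw [pC_nil hc, pC_inl hc] at h
    obtain ⟨h1, h2⟩ := List.cons.injEq .. ▸ h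
    exfalso
    have : c * 1 = c * c₀' := by rw [mul_one]; exact Sum.inl.inj h1
    exact hv'.1 c₀' (by simp) (mul_left_cancel this).symm
  · rw [pC_nil hc, pC_inr hc] at h
    simp at h
  · rw [pC_nil hc, pC_inl hc] at h
    obtain ⟨h1, h2⟩ := List.cons.injEq .. ▸ h
    exfalso
    have : c * 1 = c * c₀ := by rw [mul_one]; exact (Sum.inl.inj h1).symm
    exact hv.1 c₀ (by simp) (mul_left_cancel this).symm
  · rw [pC_inl hc, pC_inl hc] at h
    obtain ⟨h1, h2⟩ := List.cons.injEq .. ▸ h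
    rw [mul_left_cancel (Sum.inl.inj h1), h2]
  · rw [pC_inl hc, pC_inr hc] at h
    obtain ⟨h1, h2⟩ := List.cons.injEq .. ▸ h
    exfalso
    have : c * c₀ = c * 1 := by rw [mul_one]; exact Sum.inl.inj h1
    exact hv.1 c₀ (by simp) (mul_left_cancel this)
  · rw [pC_nil hc, pC_inr hc] at h
    simp at h
  · rw [pC_inl hc, pC_inr hc] at h
    obtain ⟨h1, h2⟩ := List.cons.injEq .. ▸ h
    exfalso
    have : c * c₀' = c * 1 := by rw [mul_one]; exact (Sum.inl.inj h1).symm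
    exact hv'.1 c₀' (by simp) (mul_left_cancel this)
  · rw [pC_inr hc, pC_inr hc] at h
    simpa using h

lemma head_inr_of_nice {c : CC Y} {h₀ : CC Y ⊕ X} {t₀ : SS X Y}
    (hu : Nice (.inl c :: h₀ :: t₀)) : ∃ x, h₀ = .inr x := by
  have := (List.isChain_cons_cons.mp hu.2).1
  rcases h₀ with c₀ | x
  · exact absurd (this rfl rfl) id
  · exact ⟨x, rfl⟩

lemma of_mul_ne_one (x : X) (w : FreeMonoid X) : FreeMonoid.of x * w ≠ 1 := by
  intro h
  simpa using congrArg FreeMonoid.toList h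

lemma cut_unique : ∀ (u u' v v' : SS X Y), Nice u → Nice u' → Nice v → Nice v' →
    glue u v = glue u' v' → cL u = cL u' → xL u = xL u' → u = u' ∧ v = v' := by
  intro u
  induction u with
  | nil =>
    intro u' v v' _ hu' hv hv' hg hc hx
    have hu'nil : u' = [] := by
      by_contra hne
      rcases nice_ne_nil hu' hne with h1 | h1
      · exact h1 (by rw [← hc, cL_nil])
      · exact h1 (by rw [← hx, xL_nil])
    subst hu'nil
    exact ⟨rfl, by rwa [glue_nil, glue_nil] at hg⟩
  | cons h t ih =>
    intro u' v v' hu hu' hv hv' hg hc hx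
    rcases h with cₕ | x
    · -- head is inl cₕ
      have hcne : cₕ ≠ 1 := hu.1 cₕ (by simp)
      rcases u' with _ | ⟨(c' | x'), t'⟩
      · -- u' = []
        exfalso
        rw [cL_inl, cL_nil] at hc
        exact hcne (cc_mul_eq_one hc).1
      · -- u' = inl c' :: t'
        have hc'ne : c' ≠ 1 := hu'.1 c' (by simp)
        rcases ht : t with _ | ⟨h₀, t₀⟩ <;> rcases ht' : t' with _ | ⟨h₀', t₀'⟩ <;>
          subst ht <;> subst ht'
        · -- t = [], t' = []
          rw [cL_inl, cL_inl, cL_nil, mul_one, mul_one] at hc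
          subst hc
          rw [glue_inl, glue_inl, glue_nil, glue_nil] at hg
          exact ⟨rfl, pC_inj hcne hv hv' hg⟩
        · -- t = [], t' = h₀' :: t₀'
          exfalso
          obtain ⟨x', rfl⟩ := head_inr_of_nice hu'
          rw [xL_inl, xL_inl, xL_nil, xL_inr] at hx
          exact of_mul_ne_one x' _ hx.symm
        · -- t = h₀ :: t₀, t' = []
          exfalso
          obtain ⟨x₀, rfl⟩ := head_inr_of_nice hu
          rw [xL_inl, xL_inl, xL_nil, xL_inr] at hx
          exact of_mul_ne_one x₀ _ hx
        · -- both nonempty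
          obtain ⟨x₀, rfl⟩ := head_inr_of_nice hu
          obtain ⟨x₀', rfl⟩ := head_inr_of_nice hu'
          rw [glue_inl, glue_inl, glue_inr, glue_inr, pC_inr hcne, pC_inr hc'ne] at hg
          injection hg with h1 h2
          have hcc : cₕ = c' := Sum.inl.inj h1
          subst hcc
          rw [cL_inl, cL_inl] at hc
          rw [xL_inl, xL_inl] at hx
          rw [← glue_inr, ← glue_inr] at h2
          obtain ⟨heq, hveq⟩ := ih (Sum.inr x₀' :: t₀') v v' (nice_tail hu)
            (nice_tail hu') hv hv' h2 (mul_left_cancel hc) hx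
          exact ⟨by rw [heq], hveq⟩
      · -- u' = inr x' :: t' : heads of glue differ
        exfalso
        rw [glue_inl, glue_inr] at hg
        rcases hgl : glue t v with _ | ⟨(c₀ | x₀), s⟩ <;> rw [hgl] at hg
        · rw [pC_nil hcne] at hg; simp at hg
        · rw [pC_inl hcne] at hg; simp at hg
        · rw [pC_inr hcne] at hg; simp at hg
    · -- head is inr x
      rcases u' with _ | ⟨(c' | x'), t'⟩
      · exfalso
        rw [xL_inr, xL_nil] at hx
        exact of_mul_ne_one x _ hx
      · exfalso
        have hc'ne : c' ≠ 1 := hu'.1 c' (by simp)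
        rw [glue_inr, glue_inl] at hg
        rcases hgl : glue t' v' with _ | ⟨(c₀ | x₀), s⟩ <;> rw [hgl] at hg
        · rw [pC_nil hc'ne] at hg; simp at hg
        · rw [pC_inl hc'ne] at hg; simp at hg
        · rw [pC_inr hc'ne] at hg; simp at hg
      · rw [glue_inr, glue_inr] at hg
        obtain ⟨h1, h2⟩ := List.cons.injEq .. ▸ hg
        have hxx : x = x' := Sum.inr.inj h1
        subst hxx
        rw [xL_inr, xL_inr] at hx
        rw [cL_inr, cL_inr] at hc
        obtain ⟨ht, hv⟩ := ih t' v v' (nice_tail hu) (nice_tail hu') hv hv' h2 hc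
          (mul_left_cancel hx)
        exact ⟨by rw [ht], hv⟩

lemma rigid {a b c d : MM X Y} (h : a * b = c * d)
    (h1 : Monoid.Coprod.fst a = Monoid.Coprod.fst c)
    (h2 : Monoid.Coprod.snd a = Monoid.Coprod.snd c) : a = c ∧ b = d := by
  have hg : glue (nf a) (nf b) = glue (nf c) (nf d) := by
    rw [← Phi_glue, ← Phi_glue]
    show Phi a (Phi b []) = Phi c (Phi d [])
    rw [← Phi_mul, ← Phi_mul, h]
  obtain ⟨h3, h4⟩ := cut_unique (nf a) (nf c) (nf b) (nf d) (nice_nf a) (nice_nf c)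
    (nice_nf b) (nice_nf d) hg (by rw [cL_nf, cL_nf, h1]) (by rw [xL_nf, xL_nf, h2])
  exact ⟨by rw [← emb_nf a, ← emb_nf c, h3], by rw [← emb_nf b, ← emb_nf d, h4]⟩

lemma uniqueProds (X Y : Type*) : UniqueProds (MM X Y) := by
  let f : MM X Y →ₙ* (CC Y × FreeMonoid X) :=
    { toFun := fun m => (Monoid.Coprod.fst m, Monoid.Coprod.snd m)
      map_mul' := fun x y => by simp [Prod.ext_iff] }
  refine UniqueProds.of_mulHom f ?_
  intro a b c d habcd hf
  obtain ⟨hfa, hfb⟩ := hf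
  have h1 : Monoid.Coprod.fst a = Monoid.Coprod.fst c := congrArg Prod.fst hfa
  have h2 : Monoid.Coprod.snd a = Monoid.Coprod.snd c := congrArg Prod.snd hfa
  exact rigid habcd h1 h2

end Stmt10Aux

/-- Let `M = [Y] ∗ ⟨X⟩` be the coproduct of the free commutative monoid on
`Y` and the free monoid on `X`. The monoid algebra `ℤ[M]` is a domain. -/
theorem stmt10 (X Y : Type*) :
    IsDomain (MonoidAlgebra ℤ (Monoid.Coprod (Multiplicative (Y →₀ ℕ)) (FreeMonoid X))) := by
  haveI := Stmt10Aux.uniqueProds X Y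
  exact NoZeroDivisors.to_isDomain _
end

section
/- Let X and Y be (possibly empty) sets and let M = [Y] ∗ ⟨X⟩ be the monoid coproduct of the free commutative monoid on Y and the free monoid on X. If f, g ∈ ℤ[M] (MonoidAlgebra ℤ M) satisfy f^n = g^n for some integer n ≥ 1, then f = g or f = -g. -/
set_option linter.unusedSectionVars false

set_option maxRecDepth 8000

namespace Stmt11Aux

open MonoidAlgebra Finsupp

variable {M : Type*} [Monoid M]

@[simp] theorem ma_add_apply (f g : MonoidAlgebra ℤ M) (m : M) : (f + g).coeff m = f.coeff m + g.coeff m := rfl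
@[simp] theorem ma_neg_apply (f : MonoidAlgebra ℤ M) (m : M) : (-f).coeff m = -(f.coeff m) := rfl
@[simp] theorem ma_sub_apply (f g : MonoidAlgebra ℤ M) (m : M) : (f - g).coeff m = f.coeff m - g.coeff m := rfl
@[simp] theorem ma_zero_apply (m : M) : (0 : MonoidAlgebra ℤ M).coeff m = 0 := rfl

variable [LinearOrder M]

/-- `f` has positive leading coefficient. -/
def Pos (f : MonoidAlgebra ℤ M) : Prop :=
  ∃ m : M, 0 < f.coeff m ∧ ∀ u : M, m < u → f.coeff u = 0

theorem Pos.ne_zero {f : MonoidAlgebra ℤ M} (h : Pos f) : f ≠ 0 := by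
  obtain ⟨m, hm, -⟩ := h
  intro h0
  simp [h0] at hm

theorem pos_or_pos_neg {f : MonoidAlgebra ℤ M} (hf : f ≠ 0) : Pos f ∨ Pos (-f) := by
  have hne : f.coeff.support.Nonempty :=
    Finsupp.support_nonempty_iff.mpr (by rwa [Ne, MonoidAlgebra.coeff_eq_zero])
  set m := f.coeff.support.max' hne with hm
  have hmem : m ∈ f.coeff.support := f.coeff.support.max'_mem hne
  have hmax : ∀ u : M, m < u → f.coeff u = 0 := by
    intro u hu
    by_contra h0
    exact absurd (f.coeff.support.le_max' u (Finsupp.mem_support_iff.mpr h0)) (not_le.mpr hu)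
  have hne0 : f.coeff m ≠ 0 := Finsupp.mem_support_iff.mp hmem
  rcases lt_or_gt_of_ne hne0 with h | h
  · right
    exact ⟨m, by simpa using h, fun u hu => by simp [hmax u hu]⟩
  · left
    exact ⟨m, h, hmax⟩

theorem not_pos_and_pos_neg {f : MonoidAlgebra ℤ M} (h1 : Pos f) (h2 : Pos (-f)) : False := by
  obtain ⟨m1, hm1, hmax1⟩ := h1
  obtain ⟨m2, hm2, hmax2⟩ := h2
  have hm2' : f.coeff m2 < 0 := by
    have := hm2; rw [ma_neg_apply] at this; omega
  rcases lt_trichotomy m1 m2 with h | h | h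
  · exact absurd (hmax1 m2 h) (ne_of_lt hm2')
  · subst h; exact absurd hm1 (not_lt.mpr hm2'.le)
  · have := hmax2 m1 h
    rw [ma_neg_apply, neg_eq_zero] at this
    exact absurd this (ne_of_gt hm1)

theorem Pos.add {f g : MonoidAlgebra ℤ M} (hf : Pos f) (hg : Pos g) : Pos (f + g) := by
  obtain ⟨m1, hm1, hmax1⟩ := hf
  obtain ⟨m2, hm2, hmax2⟩ := hg
  refine ⟨max m1 m2, ?_, fun u hu => ?_⟩
  · rcases lt_trichotomy m1 m2 with h | h | h
    · rw [max_eq_right h.le, ma_add_apply, hmax1 m2 h, zero_add]; exact hm2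
    · subst h; rw [max_self, ma_add_apply]; positivity
    · rw [max_eq_left h.le, ma_add_apply, hmax2 m1 h, add_zero]; exact hm1
  · rw [ma_add_apply,
      hmax1 u (lt_of_le_of_lt (le_max_left m1 m2) hu),
      hmax2 u (lt_of_le_of_lt (le_max_right m1 m2) hu), add_zero]

section Covariant

variable (hR : ∀ (c : M) {a b : M}, a < b → a * c < b * c)
  (hL : ∀ (c : M) {a b : M}, a < b → c * a < c * b)

include hR hL

theorem mul_le_mul'' {a b c d : M} (h1 : a ≤ b) (h2 : c ≤ d) : a * c ≤ b * d := by
  rcases h1.lt_or_eq with h | rfl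
  · rcases h2.lt_or_eq with h' | rfl
    · exact ((hR c h).trans (hL b h')).le
    · exact (hR c h).le
  · rcases h2.lt_or_eq with h' | rfl
    · exact (hL a h').le
    · exact le_rfl

theorem Pos.mul {f g : MonoidAlgebra ℤ M} (hf : Pos f) (hg : Pos g) : Pos (f * g) := by
  classical
  obtain ⟨m1, hm1, hmax1⟩ := hf
  obtain ⟨m2, hm2, hmax2⟩ := hg
  have hs1 : ∀ a ∈ f.coeff.support, a ≤ m1 := by
    intro a ha
    by_contra hlt
    exact absurd (hmax1 a (not_le.mp hlt)) (Finsupp.mem_support_iff.mp ha)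
  have hs2 : ∀ b ∈ g.coeff.support, b ≤ m2 := by
    intro b hb
    by_contra hlt
    exact absurd (hmax2 b (not_le.mp hlt)) (Finsupp.mem_support_iff.mp hb)
  refine ⟨m1 * m2, ?_, fun u hu => ?_⟩
  · have huniq : UniqueMul f.coeff.support g.coeff.support m1 m2 := by
      intro a b ha hb hab
      have ha' := hs1 a ha
      have hb' := hs2 b hb
      rcases ha'.lt_or_eq with h | rfl
      · exact absurd hab (ne_of_lt ((hR b h).trans_le (mul_le_mul'' hR hL le_rfl hb')))
      · rcases hb'.lt_or_eq with h | rfl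
        · exact absurd hab (ne_of_lt (hL a h))
        · exact ⟨rfl, rfl⟩
    rw [MonoidAlgebra.coeff_mul_mul_of_uniqueMul huniq]
    positivity
  · by_contra h0
    have hu' : u ∈ (f * g).coeff.support := Finsupp.mem_support_iff.mpr h0
    have := MonoidAlgebra.support_coeff_mul_subset f g hu'
    rw [Finset.mem_mul] at this
    obtain ⟨a, ha, b, hb, rfl⟩ := this
    exact absurd (mul_le_mul'' hR hL (hs1 a ha) (hs2 b hb)) (not_le.mpr hu)

theorem Pos.pow {f : MonoidAlgebra ℤ M} (hf : Pos f) : ∀ {n : ℕ}, 1 ≤ n → Pos (f ^ n) := by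
  intro n hn
  induction n with
  | zero => omega
  | succ k ih =>
    rcases Nat.eq_zero_or_pos k with rfl | hk
    · simpa using hf
    · rw [pow_succ]
      exact (ih hk).mul hR hL hf

theorem Pos.pow_sub {a b : MonoidAlgebra ℤ M} (ha : Pos a) (hb : Pos b)
    (hab : Pos (b - a)) : ∀ k : ℕ, Pos (b ^ (k + 1) - a ^ (k + 1)) := by
  intro k
  induction k with
  | zero => simpa using hab
  | succ k ih =>
    have key : b ^ (k + 2) - a ^ (k + 2)
        = (b - a) * b ^ (k + 1) + a * (b ^ (k + 1) - a ^ (k + 1)) := by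
      rw [sub_mul, mul_sub, ← pow_succ', ← pow_succ']
      rw [sub_add_sub_cancel]
    rw [key]
    exact ((hab.mul hR hL (hb.pow hR hL k.succ_pos)).add (ha.mul hR hL ih))

theorem eq_of_pow_eq_pos {a b : MonoidAlgebra ℤ M} (ha : Pos a) (hb : Pos b)
    {n : ℕ} (hn : 1 ≤ n) (h : a ^ n = b ^ n) : a = b := by
  by_contra hne
  obtain ⟨k, rfl⟩ : ∃ k, n = k + 1 := ⟨n - 1, by omega⟩
  have hd : b - a ≠ 0 := sub_ne_zero_of_ne (Ne.symm hne)
  rcases pos_or_pos_neg hd with hp | hp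
  · have := ha.pow_sub hR hL hb hp k
    rw [h, sub_self] at this
    exact this.ne_zero rfl
  · rw [neg_sub] at hp
    have := hb.pow_sub hR hL ha hp k
    rw [h, sub_self] at this
    exact this.ne_zero rfl

theorem key (f g : MonoidAlgebra ℤ M) {n : ℕ} (hn : 1 ≤ n) (h : f ^ n = g ^ n) :
    f = g ∨ f = -g := by
  have hnz : n ≠ 0 := by omega
  by_cases hg0 : g = 0
  · subst hg0
    rw [zero_pow hnz] at h
    left
    by_contra hf0
    rcases pos_or_pos_neg hf0 with hp | hp
    · exact (hp.pow hR hL hn).ne_zero h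
    · have := (hp.pow hR hL hn).ne_zero
      rw [neg_pow, h, mul_zero] at this
      exact this rfl
  · have hf0 : f ≠ 0 := by
      intro hf0
      apply hg0
      rw [hf0, zero_pow hnz] at h
      by_contra hg0'
      rcases pos_or_pos_neg hg0' with hp | hp
      · exact (hp.pow hR hL hn).ne_zero h.symm
      · have := (hp.pow hR hL hn).ne_zero
        rw [neg_pow, ← h, mul_zero] at this
        exact this rfl
    rcases pos_or_pos_neg hf0 with hpf | hpf <;> rcases pos_or_pos_neg hg0 with hpg | hpg
    · exact Or.inl (eq_of_pow_eq_pos hR hL hpf hpg hn h)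
    · rcases Nat.even_or_odd n with hev | hod
      · right
        exact eq_of_pow_eq_pos hR hL hpf hpg hn (by rw [hev.neg_pow, h])
      · exfalso
        have h1 : (-g) ^ n = -(f ^ n) := by rw [hod.neg_pow, h]
        have := hpg.pow hR hL hn
        rw [h1] at this
        exact not_pos_and_pos_neg (hpf.pow hR hL hn) this
    · rcases Nat.even_or_odd n with hev | hod
      · right
        have := eq_of_pow_eq_pos hR hL hpf hpg hn (by rw [hev.neg_pow, h])
        exact neg_eq_iff_eq_neg.mp this
      · exfalso
        have h1 : (-f) ^ n = -(g ^ n) := by rw [hod.neg_pow, h]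
        have := hpf.pow hR hL hn
        rw [h1] at this
        exact not_pos_and_pos_neg (hpg.pow hR hL hn) this
    · left
      have := eq_of_pow_eq_pos hR hL hpf hpg hn (by rw [neg_pow f n, neg_pow g n, h])
      exact neg_injective this

end Covariant

end Stmt11Aux


namespace Stmt11Aux2

open MonoidAlgebra Finsupp Monoid

variable (X Y : Type*)

abbrev A := Multiplicative (Y →₀ ℕ)
abbrev Mo := Monoid.Coprod (Multiplicative (Y →₀ ℕ)) (FreeMonoid X)

variable {X Y}

/-- sum of coefficients -/
noncomputable def sumHom : (Y →₀ ℕ) →+ ℕ where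
  toFun d := d.sum fun _ n => n
  map_zero' := Finsupp.sum_zero_index
  map_add' a b := by
    simpa using Finsupp.sum_add_index' (h := fun (_ : Y) (n : ℕ) => n) (fun _ => rfl)
      (fun _ _ _ => rfl) (f := a) (g := b)

/-- total degree homomorphism -/
noncomputable def degM : Mo X Y →* Multiplicative ℕ :=
  Coprod.lift
    (AddMonoidHom.toMultiplicative
      sumHom)
    (FreeMonoid.lift fun _ => Multiplicative.ofAdd 1)

noncomputable def deg (m : Mo X Y) : ℕ := Multiplicative.toAdd (degM m)

theorem deg_mul (a b : Mo X Y) : deg (a * b) = deg a + deg b := by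
  unfold deg; rw [map_mul]; rfl

theorem deg_one : deg (1 : Mo X Y) = 0 := by
  unfold deg; rw [map_one]; rfl

theorem deg_inl_single (y : Y) :
    deg (Coprod.inl (Multiplicative.ofAdd (Finsupp.single y 1)) : Mo X Y) = 1 := by
  unfold deg degM
  rw [Coprod.lift_apply_inl]
  show (Finsupp.single y 1).sum (fun _ n => n) = 1
  rw [Finsupp.sum_single_index rfl]

theorem deg_inr_of (x : X) : deg (Coprod.inr (FreeMonoid.of x) : Mo X Y) = 1 := by
  unfold deg degM
  rw [Coprod.lift_apply_inr, FreeMonoid.lift_eval_of]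
  rfl


section Mu

/-- the element `1 + [inl (single y 1)]` of `ℤ[A]` -/
noncomputable def genA (y : Y) : MonoidAlgebra ℤ (A Y) :=
  1 + MonoidAlgebra.single (Multiplicative.ofAdd (Finsupp.single y 1)) 1

/-- Magnus map on the commutative part, into the commutative monoid algebra. -/
noncomputable def nu : A Y →* MonoidAlgebra ℤ (A Y) where
  toFun a := (Multiplicative.toAdd a).prod fun y k => genA y ^ k
  map_one' := by
    show (0 : Y →₀ ℕ).prod _ = 1
    simp
  map_mul' a b := by
    show (Multiplicative.toAdd a + Multiplicative.toAdd b).prod _ = _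
    exact Finsupp.prod_add_index' (fun y => pow_zero _) (fun y m n => pow_add _ _ _)

theorem nu_single (y : Y) :
    nu (Multiplicative.ofAdd (Finsupp.single y 1)) = genA y := by
  show (Finsupp.single y 1).prod (fun y k => genA y ^ k) = genA y
  rw [Finsupp.prod_single_index (h := fun y k => genA y ^ k) (pow_zero _), pow_one]

/-- The Magnus homomorphism `Mo X Y →* (ℤ[Mo X Y], *)`. -/
noncomputable def mu : Mo X Y →* MonoidAlgebra ℤ (Mo X Y) :=
  Coprod.lift
    (((MonoidAlgebra.mapDomainRingHom ℤ
        (Coprod.inl : A Y →* Mo X Y)).toMonoidHom).comp nu)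
    (FreeMonoid.lift fun x =>
      1 + MonoidAlgebra.single (Coprod.inr (FreeMonoid.of x)) 1)

theorem mu_inl_single (y : Y) :
    mu (Coprod.inl (Multiplicative.ofAdd (Finsupp.single y 1)) : Mo X Y)
      = 1 + MonoidAlgebra.single (Coprod.inl (Multiplicative.ofAdd (Finsupp.single y 1))) 1 := by
  unfold mu
  rw [Coprod.lift_apply_inl]
  show (MonoidAlgebra.mapDomainRingHom ℤ (Coprod.inl : A Y →* Mo X Y))
    (nu (Multiplicative.ofAdd (Finsupp.single y 1))) = _
  rw [nu_single]
  unfold genA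
  rw [map_add, map_one]
  congr 1
  show MonoidAlgebra.mapDomain _ _ = _
  rw [MonoidAlgebra.mapDomain_single]

theorem mu_inr_of (x : X) :
    mu (Coprod.inr (FreeMonoid.of x) : Mo X Y)
      = 1 + MonoidAlgebra.single (Coprod.inr (FreeMonoid.of x)) 1 := by
  unfold mu
  rw [Coprod.lift_apply_inr, FreeMonoid.lift_eval_of]


/-- structural property of the Magnus map:
`μ m = [m] + (lower degree)` and `μ m = 1 + (degree ≥ 1)`. -/
def Good (m : Mo X Y) : Prop :=
  (∃ e : MonoidAlgebra ℤ (Mo X Y),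
      mu m = MonoidAlgebra.single m 1 + e ∧ ∀ u ∈ e.coeff.support, deg u < deg m) ∧
  (∃ N : MonoidAlgebra ℤ (Mo X Y),
      mu m = 1 + N ∧ ∀ u ∈ N.coeff.support, 1 ≤ deg u)

theorem good_one : Good (1 : Mo X Y) := by
  constructor
  · refine ⟨0, ?_, by simp⟩
    rw [map_one, add_zero, MonoidAlgebra.one_def]
  · exact ⟨0, by rw [map_one, add_zero], by simp⟩

theorem good_gen {m : Mo X Y} (h1 : mu m = 1 + MonoidAlgebra.single m 1)
    (hdeg : deg m = 1) : Good m := by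
  constructor
  · refine ⟨1, by rw [h1, add_comm], fun u hu => ?_⟩
    have := Finsupp.support_single_subset (MonoidAlgebra.one_def (R := ℤ) (M := Mo X Y) ▸ hu)
    simp only [Finset.mem_singleton] at this
    subst this
    rw [deg_one, hdeg]
    norm_num
  · refine ⟨MonoidAlgebra.single m 1, h1, fun u hu => ?_⟩
    have := Finsupp.support_single_subset hu
    simp only [Finset.mem_singleton] at this
    subst this
    rw [hdeg]

theorem good_mul {a b : Mo X Y} (ha : Good a) (hb : Good b) : Good (a * b) := by
  classical
  obtain ⟨⟨ea, hea, hdega⟩, ⟨na, hna, hna1⟩⟩ := ha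
  obtain ⟨⟨eb, heb, hdegb⟩, ⟨nb, hnb, hnb1⟩⟩ := hb
  constructor
  · refine ⟨MonoidAlgebra.single a 1 * eb + ea * MonoidAlgebra.single b 1 + ea * eb,
      ?_, fun u hu => ?_⟩
    · rw [map_mul, hea, heb]
      rw [add_mul, mul_add, mul_add, MonoidAlgebra.single_mul_single, mul_one]
      abel
    · have hsum := Finsupp.support_add (g₁ := (MonoidAlgebra.single a (1:ℤ) * eb
        + ea * MonoidAlgebra.single b 1).coeff) (g₂ := (ea * eb).coeff) (by rwa [MonoidAlgebra.coeff_add] at hu)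
      rw [deg_mul]
      rcases Finset.mem_union.mp hsum with hu' | hu'
      · rcases Finset.mem_union.mp (Finsupp.support_add (by rwa [MonoidAlgebra.coeff_add] at hu')) with hu'' | hu''
        · obtain ⟨v, hv, w, hw, rfl⟩ := Finset.mem_mul.mp (MonoidAlgebra.support_coeff_mul_subset _ _ hu'')
          have hv' : v = a := by
            have := Finsupp.support_single_subset hv
            simpa using this
          subst hv'
          rw [deg_mul]
          exact Nat.add_lt_add_left (hdegb w hw) _
        · obtain ⟨v, hv, w, hw, rfl⟩ := Finset.mem_mul.mp (MonoidAlgebra.support_coeff_mul_subset _ _ hu'')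
          have hw' : w = b := by
            have := Finsupp.support_single_subset hw
            simpa using this
          subst hw'
          rw [deg_mul]
          exact Nat.add_lt_add_right (hdega v hv) _
      · obtain ⟨v, hv, w, hw, rfl⟩ := Finset.mem_mul.mp (MonoidAlgebra.support_coeff_mul_subset _ _ hu')
        rw [deg_mul]
        exact Nat.add_lt_add (hdega v hv) (hdegb w hw)
  · refine ⟨na + nb + na * nb, ?_, fun u hu => ?_⟩
    · rw [map_mul, hna, hnb]
      noncomm_ring
    · rcases Finset.mem_union.mp (Finsupp.support_add (by rwa [MonoidAlgebra.coeff_add] at hu)) with hu' | hu'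
      · rcases Finset.mem_union.mp (Finsupp.support_add (by rwa [MonoidAlgebra.coeff_add] at hu')) with hu'' | hu''
        · exact hna1 u hu''
        · exact hnb1 u hu''
      · obtain ⟨v, hv, w, hw, rfl⟩ := Finset.mem_mul.mp (MonoidAlgebra.support_coeff_mul_subset _ _ hu')
        rw [deg_mul]
        have := hna1 v hv
        omega

theorem good_pow {a : Mo X Y} (ha : Good a) : ∀ n : ℕ, Good (a ^ n) := by
  intro n
  induction n with
  | zero => simpa using good_one
  | succ k ih => rw [pow_succ]; exact good_mul ih ha

theorem good_inl_aux (d : Y →₀ ℕ) :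
    Good (Coprod.inl (Multiplicative.ofAdd d) : Mo X Y) := by
  induction d using Finsupp.induction with
  | zero =>
    show Good (Coprod.inl (1 : A Y))
    rw [map_one]
    exact good_one
  | single_add y n d hyd hn ih =>
    have heq : (Multiplicative.ofAdd (Finsupp.single y n + d) : A Y)
        = Multiplicative.ofAdd (Finsupp.single y n) * Multiplicative.ofAdd d := rfl
    rw [heq, map_mul]
    refine good_mul ?_ ih
    have hsing : (Coprod.inl (Multiplicative.ofAdd (Finsupp.single y n)) : Mo X Y)
        = (Coprod.inl (Multiplicative.ofAdd (Finsupp.single y 1)) : Mo X Y) ^ n := by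
      rw [← map_pow]
      congr 1
      rw [← ofAdd_nsmul]
      congr 1
      rw [Finsupp.smul_single, smul_eq_mul, mul_one]
    rw [hsing]
    exact good_pow (good_gen (mu_inl_single y) (deg_inl_single y)) n

theorem good_inl (a : A Y) : Good (Coprod.inl a : Mo X Y) := by
  have := good_inl_aux (X := X) (Multiplicative.toAdd a)
  simpa using this

theorem good_inr (w : FreeMonoid X) : Good (Coprod.inr w : Mo X Y) := by
  induction w using FreeMonoid.inductionOn' with
  | one => rw [map_one]; exact good_one
  | of_mul x xs ih =>
    rw [map_mul]
    exact good_mul (good_gen (mu_inr_of x) (deg_inr_of x)) ih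

theorem good_all (m : Mo X Y) : Good m :=
  Coprod.induction_on m good_inl good_inr fun _ _ => good_mul

theorem mu_injective : Function.Injective (mu : Mo X Y → MonoidAlgebra ℤ (Mo X Y)) := by
  intro a b hab
  by_contra hne
  -- wlog deg b ≤ deg a
  wlog hdeg : deg b ≤ deg a generalizing a b
  · exact this hab.symm (Ne.symm hne) (le_of_not_ge hdeg)
  obtain ⟨⟨ea, hea, hdega⟩, -⟩ := good_all (X := X) (Y := Y) a
  obtain ⟨⟨eb, heb, hdegb⟩, -⟩ := good_all (X := X) (Y := Y) b
  have h1 : (mu a).coeff a = 1 + ea.coeff a := by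
    rw [hea]
    show (Finsupp.single a (1:ℤ)) a + ea.coeff a = 1 + ea.coeff a
    rw [Finsupp.single_eq_same]
  have h2 : (mu b).coeff a = eb.coeff a := by
    rw [heb]
    show (Finsupp.single b (1:ℤ)) a + eb.coeff a = eb.coeff a
    rw [Finsupp.single_eq_of_ne hne, zero_add]
  have hea0 : ea.coeff a = 0 := by
    by_contra h0
    exact absurd (hdega a (Finsupp.mem_support_iff.mpr h0)) (lt_irrefl _)
  have heb0 : eb.coeff a = 0 := by
    by_contra h0
    exact absurd (lt_of_lt_of_le (hdegb a (Finsupp.mem_support_iff.mpr h0)) hdeg)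
      (lt_irrefl _)
  rw [hab, h2, heb0] at h1
  rw [hea0, add_zero] at h1
  exact one_ne_zero h1.symm

end Mu


section Order

variable (X Y)

/-- an arbitrary linear order on `Mo X Y` -/
noncomputable def baseLO : LinearOrder (Mo X Y) := IsWellOrder.linearOrder WellOrderingRel

/-- a linear order on `Mo X Y` such that higher degree elements are smaller -/
noncomputable def degLO : LinearOrder (Mo X Y) :=
  letI := baseLO X Y
  LinearOrder.lift' (fun m : Mo X Y => toLex (OrderDual.toDual (deg m), m))
    (fun a b hab => by simpa using congrArg (fun p => (ofLex p).2) hab)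

variable {X Y}

theorem degLO_lt_of_deg_lt {u v : Mo X Y} (h : deg u < deg v) : (degLO X Y).lt v u := by
  letI := baseLO X Y
  show toLex (OrderDual.toDual (deg v), v) < toLex (OrderDual.toDual (deg u), u)
  rw [Prod.Lex.lt_iff]
  left
  exact h

/-- layer-1 positivity on the monoid algebra, w.r.t. `degLO` -/
noncomputable def Pos' (D : MonoidAlgebra ℤ (Mo X Y)) : Prop :=
  @Stmt11Aux.Pos _ (degLO X Y) D

theorem pos'_supp_deg {D : MonoidAlgebra ℤ (Mo X Y)} {m₀ : Mo X Y}
    (hmax : ∀ u : Mo X Y, (degLO X Y).lt m₀ u → D.coeff u = 0) :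
    ∀ v : Mo X Y, D.coeff v ≠ 0 → deg m₀ ≤ deg v := by
  intro v hv
  by_contra hlt
  exact hv (hmax v (degLO_lt_of_deg_lt (not_le.mp hlt)))

theorem pos'_mul_mu {D : MonoidAlgebra ℤ (Mo X Y)} (c : Mo X Y) (hD : Pos' D) :
    Pos' (mu c * D) := by
  classical
  obtain ⟨m₀, hpos, hmax⟩ := hD
  obtain ⟨-, N, hN, hN1⟩ := good_all (X := X) (Y := Y) c
  have hND : ∀ w : Mo X Y, (N * D).coeff w ≠ 0 → deg m₀ < deg w := by
    intro w hw
    obtain ⟨u, hu, v, hv, rfl⟩ :=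
      Finset.mem_mul.mp (MonoidAlgebra.support_coeff_mul_subset _ _ (Finsupp.mem_support_iff.mpr hw))
    rw [deg_mul]
    have h1 := hN1 u hu
    have h2 := pos'_supp_deg hmax v (Finsupp.mem_support_iff.mp hv)
    omega
  have hsplit : mu c * D = D + N * D := by
    rw [hN, add_mul, one_mul]
  refine ⟨m₀, ?_, ?_⟩
  · rw [hsplit, Stmt11Aux.ma_add_apply]
    have : (N * D).coeff m₀ = 0 := by
      by_contra h0
      exact absurd (hND m₀ h0) (lt_irrefl _)
    rw [this, add_zero]
    exact hpos
  · intro u hu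
    rw [hsplit, Stmt11Aux.ma_add_apply, hmax u hu]
    have : (N * D).coeff u = 0 := by
      by_contra h0
      exact absurd hu (@lt_asymm _ (@PartialOrder.toPreorder _
        (@LinearOrder.toPartialOrder _ (degLO X Y))) _ _ (degLO_lt_of_deg_lt (hND u h0)))
    rw [this, add_zero]

theorem pos'_mu_mul {D : MonoidAlgebra ℤ (Mo X Y)} (c : Mo X Y) (hD : Pos' D) :
    Pos' (D * mu c) := by
  classical
  obtain ⟨m₀, hpos, hmax⟩ := hD
  obtain ⟨-, N, hN, hN1⟩ := good_all (X := X) (Y := Y) c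
  have hND : ∀ w : Mo X Y, (D * N).coeff w ≠ 0 → deg m₀ < deg w := by
    intro w hw
    obtain ⟨u, hu, v, hv, rfl⟩ :=
      Finset.mem_mul.mp (MonoidAlgebra.support_coeff_mul_subset _ _ (Finsupp.mem_support_iff.mpr hw))
    rw [deg_mul]
    have h1 := hN1 v hv
    have h2 := pos'_supp_deg hmax u (Finsupp.mem_support_iff.mp hu)
    omega
  have hsplit : D * mu c = D + D * N := by
    rw [hN, mul_add, mul_one]
  refine ⟨m₀, ?_, ?_⟩
  · rw [hsplit, Stmt11Aux.ma_add_apply]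
    have : (D * N).coeff m₀ = 0 := by
      by_contra h0
      exact absurd (hND m₀ h0) (lt_irrefl _)
    rw [this, add_zero]
    exact hpos
  · intro u hu
    rw [hsplit, Stmt11Aux.ma_add_apply, hmax u hu]
    have : (D * N).coeff u = 0 := by
      by_contra h0
      exact absurd hu (@lt_asymm _ (@PartialOrder.toPreorder _
        (@LinearOrder.toPartialOrder _ (degLO X Y))) _ _ (degLO_lt_of_deg_lt (hND u h0)))
    rw [this, add_zero]

variable (X Y)

/-- the bi-invariant linear order on `Mo X Y`, pulled back through the Magnus map. -/
noncomputable def ordLO : LinearOrder (Mo X Y) where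
  le a b := a = b ∨ Pos' (mu b - mu a)
  lt a b := Pos' (mu b - mu a)
  le_refl a := Or.inl rfl
  le_trans a b c hab hbc := by
    rcases hab with rfl | hab
    · exact hbc
    rcases hbc with rfl | hbc
    · exact Or.inr hab
    · right
      have := @Stmt11Aux.Pos.add _ _ (degLO X Y) _ _ hbc hab
      rwa [sub_add_sub_cancel] at this
  le_antisymm a b hab hba := by
    rcases hab with rfl | hab
    · rfl
    rcases hba with rfl | hba
    · rfl
    exfalso
    refine @Stmt11Aux.not_pos_and_pos_neg _ _ (degLO X Y) _ hab ?_
    rwa [neg_sub]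
  le_total a b := by
    by_cases hab : a = b
    · exact Or.inl (Or.inl hab)
    have hne : mu b - mu a ≠ 0 := by
      rw [sub_ne_zero]
      exact fun h => hab (mu_injective h.symm)
    rcases @Stmt11Aux.pos_or_pos_neg _ _ (degLO X Y) _ hne with h | h
    · exact Or.inl (Or.inr h)
    · rw [neg_sub] at h
      exact Or.inr (Or.inr h)
  lt_iff_le_not_ge a b := by
    constructor
    · intro h
      have hne : a ≠ b := by
        rintro rfl
        have h' : Pos' (mu a - mu a) := h
        rw [sub_self] at h'
        exact (@Stmt11Aux.Pos.ne_zero _ _ (degLO X Y) _ h') rfl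
      refine ⟨Or.inr h, ?_⟩
      rintro (rfl | hba)
      · exact hne rfl
      · refine @Stmt11Aux.not_pos_and_pos_neg _ _ (degLO X Y) _ h ?_
        rwa [neg_sub]
    · rintro ⟨rfl | hab, hnba⟩
      · exact absurd (Or.inl rfl) hnba
      · exact hab
  toDecidableLE := fun _ _ => Classical.dec _

end Order

theorem main_specific (f g : MonoidAlgebra ℤ (Mo X Y)) {n : ℕ} (hn : 1 ≤ n)
    (h : f ^ n = g ^ n) : f = g ∨ f = -g := by
  letI := ordLO X Y
  refine Stmt11Aux.key ?_ ?_ f g hn h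
  · intro c a b hab
    show Pos' (mu (b * c) - mu (a * c))
    rw [map_mul, map_mul, ← sub_mul]
    exact pos'_mu_mul c hab
  · intro c a b hab
    show Pos' (mu (c * b) - mu (c * a))
    rw [map_mul, map_mul, ← mul_sub]
    exact pos'_mul_mu c hab

end Stmt11Aux2


/-- Let `M = [Y] ∗ ⟨X⟩` be the coproduct of the free commutative monoid on
`Y` and the free monoid on `X`. If `f, g ∈ ℤ[M]` satisfy `f ^ n = g ^ n` for some
`n ≥ 1`, then `f = g` or `f = -g`. -/
theorem stmt11 (X Y : Type*)
    (f g : MonoidAlgebra ℤ (Monoid.Coprod (Multiplicative (Y →₀ ℕ)) (FreeMonoid X)))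
    (n : ℕ) (hn : 1 ≤ n) (h : f ^ n = g ^ n) :
    f = g ∨ f = -g := by
  exact Stmt11Aux2.main_specific f g hn h
end
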